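/- arXiv:1706.09607 — 9 statements merged into one kernel-verified Lean document; each statement's English description precedes it below -/
import Mathlib

section
/- Suppose A satisfies the RIP of order k+b+1 with constant δ. Let z be a vector supported on a set S with |S| = k+b, let u = z + ŝ e_i and w = s² z − ŝ e_i, where i ∉ S, s² < 1 and |ŝ| = |s|·‖z‖₂. Then ‖Au‖₂² − ‖Aw‖₂² ≥ ‖z‖₂² (1+s²)² ( (1−s²)/(1+s²) − δ ). -/
open scoped BigOperators

/-- `A` satisfies the restricted isometry property of order `k` with constant `δ`:
`(1−δ)‖x‖₂² ≤ ‖Ax‖₂² ≤ (1+δ)‖x‖₂²` for all `k`-sparse `x`. -/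
def RIP {m n : ℕ} (A : Matrix (Fin m) (Fin n) ℝ) (k : ℕ) (δ : ℝ) : Prop :=
  ∀ x : Fin n → ℝ, (∃ S : Finset (Fin n), S.card ≤ k ∧ ∀ i ∉ S, x i = 0) →
    (1 - δ) * (∑ i, x i ^ 2) ≤ (∑ i, (A.mulVec x) i ^ 2) ∧
    (∑ i, (A.mulVec x) i ^ 2) ≤ (1 + δ) * (∑ i, x i ^ 2)

/-- Suppose `A` satisfies the RIP of order `k+b+1` with constant `δ`. Let `z` be supported on
`S` with `|S| = k+b`, `u = z + sh e_i`, `w = s² z − sh e_i`, `i ∉ S`, `s² < 1`,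
`|sh| = |s|·‖z‖₂`. Then `‖Au‖₂² − ‖Aw‖₂² ≥ ‖z‖₂² (1+s²)² ((1−s²)/(1+s²) − δ)`. -/
theorem stmt3 (m n k b : ℕ) (A : Matrix (Fin m) (Fin n) ℝ) (δ : ℝ)
    (hRIP : RIP A (k + b + 1) δ)
    (z : Fin n → ℝ) (S : Finset (Fin n)) (hScard : S.card = k + b)
    (hz : ∀ i ∉ S, z i = 0)
    (i : Fin n) (hi : i ∉ S) (s sh : ℝ) (hs : s ^ 2 < 1)
    (hsh : |sh| = |s| * Real.sqrt (∑ j, z j ^ 2)) :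
    (∑ j, (A.mulVec (z + sh • (Pi.single i 1 : Fin n → ℝ))) j ^ 2) -
      (∑ j, (A.mulVec (s ^ 2 • z - sh • (Pi.single i 1 : Fin n → ℝ))) j ^ 2) ≥
    (∑ j, z j ^ 2) * (1 + s ^ 2) ^ 2 * ((1 - s ^ 2) / (1 + s ^ 2) - δ) := by
  set Z := ∑ j, z j ^ 2 with hZ
  have hZnn : 0 ≤ Z := Finset.sum_nonneg fun j _ => sq_nonneg _
  have hzi : z i = 0 := hz i hi
  have hsh2 : sh ^ 2 = s ^ 2 * Z := by
    have := congrArg (· ^ 2) hsh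
    simp only [mul_pow, sq_abs] at this
    rw [this, Real.sq_sqrt hZnn]
  -- support set
  have hsupp : ∀ (x : Fin n → ℝ), (∀ j ∉ insert i S, x j = 0) →
      ∃ T : Finset (Fin n), T.card ≤ k + b + 1 ∧ ∀ j ∉ T, x j = 0 := by
    intro x hx
    refine ⟨insert i S, ?_, hx⟩
    calc (insert i S).card ≤ S.card + 1 := Finset.card_insert_le _ _
      _ = k + b + 1 := by rw [hScard]
  have hsing : ∀ j, j ≠ i → (Pi.single i 1 : Fin n → ℝ) j = 0 := by
    intro j hj; simp [Pi.single_apply, hj]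
  -- norms of u and w
  have key : ∀ c d : ℝ, ∑ j, (c • z + d • (Pi.single i 1 : Fin n → ℝ)) j ^ 2
      = c ^ 2 * Z + d ^ 2 := by
    intro c d
    have : ∀ j, (c • z + d • (Pi.single i 1 : Fin n → ℝ)) j ^ 2
        = c ^ 2 * z j ^ 2 + d ^ 2 * (Pi.single i 1 : Fin n → ℝ) j ^ 2 := by
      intro j
      by_cases hj : j = i
      · subst hj; simp [hzi, mul_pow]
      · simp [hsing j hj, mul_pow]
    rw [Finset.sum_congr rfl fun j _ => this j]
    rw [Finset.sum_add_distrib, ← Finset.mul_sum, ← Finset.mul_sum]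
    have : ∑ j, (Pi.single i 1 : Fin n → ℝ) j ^ 2 = 1 := by
      rw [Finset.sum_eq_single i]
      · simp
      · intro j _ hj; simp [hsing j hj]
      · simp
    rw [this, ← hZ, mul_one]
  have hu := hRIP (z + sh • (Pi.single i 1 : Fin n → ℝ)) (hsupp _ (by
    intro j hj
    simp only [Finset.mem_insert, not_or] at hj
    simp [hz j hj.2, hsing j hj.1]))
  have hw := hRIP (s ^ 2 • z - sh • (Pi.single i 1 : Fin n → ℝ)) (hsupp _ (by
    intro j hj
    simp only [Finset.mem_insert, not_or] at hj
    simp [hz j hj.2, hsing j hj.1]))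
  have hnu : ∑ j, (z + sh • (Pi.single i 1 : Fin n → ℝ)) j ^ 2 = Z + s ^ 2 * Z := by
    have := key 1 sh
    simp only [one_smul, one_pow, one_mul] at this
    rw [this, hsh2]
  have hnw : ∑ j, (s ^ 2 • z - sh • (Pi.single i 1 : Fin n → ℝ)) j ^ 2
      = s ^ 4 * Z + s ^ 2 * Z := by
    have heq : (s ^ 2 • z - sh • (Pi.single i 1 : Fin n → ℝ))
        = (s ^ 2 • z + (-sh) • (Pi.single i 1 : Fin n → ℝ)) := by
      funext j; simp [sub_eq_add_neg]
    rw [heq, key (s ^ 2) (-sh), neg_sq, hsh2]; ring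
  rw [hnu] at hu
  rw [hnw] at hw
  -- RHS simplification
  have h1s : (0:ℝ) < 1 + s ^ 2 := by positivity
  have hrhs : Z * (1 + s ^ 2) ^ 2 * ((1 - s ^ 2) / (1 + s ^ 2) - δ)
      = Z * ((1 + s ^ 2) * (1 - s ^ 2) - δ * (1 + s ^ 2) ^ 2) := by
    field_simp
  rw [ge_iff_le, hrhs]
  nlinarith [hu.1, hw.2, hZnn, sq_nonneg s]
end

section
/- (Main lemma) Let A satisfy the RIP of order k+b+1 with constant δ_{k+b+1}. Let T, Λ be index sets with Λ ⊆ T ∪ T₀, |T ∪ Λ| = k + b, and |T \ Λ| = k − g − t ≥ 1. Let z be the vector supported on T ∪ Λ whose entries satisfy A_Λᵀ A z̃ = 0, where z̃ is the zero-extension of z to ℝⁿ. Then max_{i ∈ T\Λ} |⟨Ae_i, Az̃⟩| − max_{i ∉ T∪Λ} |⟨Ae_i, Az̃⟩| ≥ (1/√(k−g−t)) (1 − √(k−g−t+1) · δ_{k+b+1}) ‖z̃‖₂. -/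
open scoped BigOperators

private lemma sum_mulVec_mul {m n : ℕ} (A : Matrix (Fin m) (Fin n) ℝ) (w : Fin n → ℝ)
    (q : Fin m → ℝ) :
    ∑ l, (A.mulVec w) l * q l = ∑ i, w i * (∑ l, A l i * q l) := by
  simp only [Matrix.mulVec, dotProduct, Finset.sum_mul]
  rw [Finset.sum_comm]
  exact Finset.sum_congr rfl fun i _ => by
    rw [Finset.mul_sum]
    exact Finset.sum_congr rfl fun l _ => by ring

private lemma polar {m n K : ℕ} {A : Matrix (Fin m) (Fin n) ℝ} {δ : ℝ} (hRIP : RIP A K δ)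
    (x y : Fin n → ℝ) (S : Finset (Fin n)) (hS : S.card ≤ K)
    (hx : ∀ i ∉ S, x i = 0) (hy : ∀ i ∉ S, y i = 0) :
    (∑ i, x i * y i) - δ / 2 * ((∑ i, x i ^ 2) + (∑ i, y i ^ 2)) ≤
      ∑ l, (A.mulVec x) l * (A.mulVec y) l := by
  have h1 := (hRIP (x + y) ⟨S, hS, fun i hi => by simp [hx i hi, hy i hi]⟩).1
  have h2 := (hRIP (x - y) ⟨S, hS, fun i hi => by simp [hx i hi, hy i hi]⟩).2
  rw [Matrix.mulVec_add] at h1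
  rw [Matrix.mulVec_sub] at h2
  have e1 : ∀ (f g : Fin n → ℝ), ∑ i, (f i + g i) ^ 2 =
      (∑ i, f i ^ 2) + 2 * (∑ i, f i * g i) + (∑ i, g i ^ 2) := by
    intro f g
    rw [Finset.mul_sum, ← Finset.sum_add_distrib, ← Finset.sum_add_distrib]
    exact Finset.sum_congr rfl fun i _ => by ring
  have e1' : ∀ (f g : Fin n → ℝ), ∑ i, (f i - g i) ^ 2 =
      (∑ i, f i ^ 2) - 2 * (∑ i, f i * g i) + (∑ i, g i ^ 2) := by
    intro f g
    rw [Finset.mul_sum, ← Finset.sum_sub_distrib, ← Finset.sum_add_distrib]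
    exact Finset.sum_congr rfl fun i _ => by ring
  have e2 : ∀ (f g : Fin m → ℝ), ∑ l, (f l + g l) ^ 2 =
      (∑ l, f l ^ 2) + 2 * (∑ l, f l * g l) + (∑ l, g l ^ 2) := by
    intro f g
    rw [Finset.mul_sum, ← Finset.sum_add_distrib, ← Finset.sum_add_distrib]
    exact Finset.sum_congr rfl fun l _ => by ring
  have e2' : ∀ (f g : Fin m → ℝ), ∑ l, (f l - g l) ^ 2 =
      (∑ l, f l ^ 2) - 2 * (∑ l, f l * g l) + (∑ l, g l ^ 2) := by
    intro f g
    rw [Finset.mul_sum, ← Finset.sum_sub_distrib, ← Finset.sum_add_distrib]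
    exact Finset.sum_congr rfl fun l _ => by ring
  simp only [Pi.add_apply, Pi.sub_apply] at h1 h2
  rw [e1 x y, e2 (A.mulVec x) (A.mulVec y)] at h1
  rw [e1' x y, e2' (A.mulVec x) (A.mulVec y)] at h2
  nlinarith [h1, h2]

set_option maxHeartbeats 2000000 in
private theorem key {m n K : ℕ} (A : Matrix (Fin m) (Fin n) ℝ) (δ : ℝ) (hRIP : RIP A K δ)
    (U S : Finset (Fin n)) (hK : U.card + 1 ≤ K)
    (z : Fin n → ℝ) (c : Fin n → ℝ)
    (hcdef : ∀ i, c i = ∑ l, A l i * (A.mulVec z) l)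
    (hzsupp : ∀ i ∉ U, z i = 0)
    (horth : ∀ i ∈ U, i ∉ S → c i = 0)
    (h1 : S.Nonempty) (h2 : Uᶜ.Nonempty) :
    (S.sup' h1 fun i => |c i|) - (Uᶜ.sup' h2 fun i => |c i|) ≥
    (1 / Real.sqrt (S.card : ℝ)) *
      ((1 - Real.sqrt ((S.card : ℝ) + 1) * δ) * Real.sqrt (∑ i, z i ^ 2)) := by
  classical
  set N : ℝ := ∑ i, z i ^ 2 with hN
  have hN0 : 0 ≤ N := Finset.sum_nonneg fun i _ => sq_nonneg _
  set s : ℝ := (S.card : ℝ) with hs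
  have hs1 : (1 : ℝ) ≤ s := by
    rw [hs]
    exact Nat.one_le_cast.mpr (Finset.card_pos.mpr h1)
  have hs0 : (0 : ℝ) ≤ s := by linarith
  obtain ⟨j, hj, hjv⟩ := Finset.exists_mem_eq_sup' h2 (fun i => |c i|)
  rw [hjv]
  set u : ℝ := S.sup' h1 (fun i => |c i|) with hu
  have hule : ∀ i ∈ S, |c i| ≤ u := by
    intro i hi
    rw [hu]
    exact Finset.le_sup' (fun i => |c i|) hi
  have hu0 : 0 ≤ u := by
    obtain ⟨i0, hi0⟩ := h1
    exact (abs_nonneg (c i0)).trans (hule i0 hi0)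
  have hjU : j ∉ U := by simpa using hj
  have hzj : z j = 0 := hzsupp j hjU
  set P : ℝ := ∑ l, (A.mulVec z) l ^ 2 with hP
  have huniv : ∑ i, z i * c i = P := by
    calc ∑ i, z i * c i = ∑ i, z i * (∑ l, A l i * (A.mulVec z) l) :=
          Finset.sum_congr rfl fun i _ => by rw [hcdef]
      _ = ∑ l, (A.mulVec z) l * (A.mulVec z) l := (sum_mulVec_mul A z (A.mulVec z)).symm
      _ = P := Finset.sum_congr rfl fun l _ => (sq (A.mulVec z l)).symm
  have hPS : P = ∑ i ∈ S, z i * c i := by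
    rw [← huniv]
    refine (Finset.sum_subset (Finset.subset_univ S) fun i _ hiS => ?_).symm
    by_cases hiU : i ∈ U
    · rw [horth i hiU hiS, mul_zero]
    · rw [hzsupp i hiU, zero_mul]
  -- Cauchy-Schwarz bound
  have habs0 : 0 ≤ ∑ i ∈ S, |z i| := Finset.sum_nonneg fun i _ => abs_nonneg _
  have hCS : ∑ i ∈ S, |z i| ≤ Real.sqrt (s * N) := by
    have h := sq_sum_le_card_mul_sum_sq (s := S) (f := fun i => |z i|)
    have h2' : (∑ i ∈ S, |z i|) ^ 2 ≤ s * N := by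
      refine h.trans ?_
      rw [hs, hN]
      gcongr
      · calc ∑ i ∈ S, |z i| ^ 2 = ∑ i ∈ S, z i ^ 2 :=
            Finset.sum_congr rfl fun i _ => sq_abs _
          _ ≤ ∑ i, z i ^ 2 :=
            Finset.sum_le_sum_of_subset_of_nonneg (Finset.subset_univ S)
              fun i _ _ => sq_nonneg _
    calc ∑ i ∈ S, |z i| = Real.sqrt ((∑ i ∈ S, |z i|) ^ 2) := (Real.sqrt_sq habs0).symm
      _ ≤ Real.sqrt (s * N) := Real.sqrt_le_sqrt h2'
  set a : ℝ := Real.sqrt (s * N) with ha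
  have ha0 : 0 ≤ a := Real.sqrt_nonneg _
  have ha2 : a ^ 2 = s * N := Real.sq_sqrt (mul_nonneg hs0 hN0)
  have hPu : P ≤ u * a := by
    calc P = ∑ i ∈ S, z i * c i := hPS
      _ ≤ ∑ i ∈ S, |z i| * u := Finset.sum_le_sum fun i hi => by
          calc z i * c i ≤ |z i * c i| := le_abs_self _
            _ = |z i| * |c i| := abs_mul _ _
            _ ≤ |z i| * u := mul_le_mul_of_nonneg_left (hule i hi) (abs_nonneg _)
      _ = (∑ i ∈ S, |z i|) * u := (Finset.sum_mul _ _ _).symm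
      _ ≤ a * u := mul_le_mul_of_nonneg_right hCS hu0
      _ = u * a := mul_comm _ _
  -- sign
  set σ : ℝ := if 0 ≤ c j then 1 else -1 with hσ
  have hσc : σ * c j = |c j| := by
    rw [hσ]
    split_ifs with h
    · rw [one_mul, abs_of_nonneg h]
    · rw [abs_of_neg (lt_of_not_ge h)]; ring
  have hσ2 : σ ^ 2 = 1 := by rw [hσ]; split_ifs <;> norm_num
  set r : ℝ := Real.sqrt (s + 1) with hr
  have hr2 : r ^ 2 = s + 1 := Real.sq_sqrt (by linarith)
  have hrpos : 0 < r := Real.sqrt_pos.mpr (by linarith)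
  -- the vector y
  set y : Fin n → ℝ := fun i => if i = j then -(a * σ) else z i with hy
  have hsum_zy : ∑ i, z i * y i = N := by
    rw [hN]
    refine Finset.sum_congr rfl fun i _ => ?_
    rcases eq_or_ne i j with h | h
    · subst h; simp [hy, hzj]
    · simp [hy, h]; ring
  have hsum_yy : ∑ i, y i ^ 2 = N + a ^ 2 := by
    have e : ∀ i, y i ^ 2 = z i ^ 2 + (if i = j then a ^ 2 else 0) := by
      intro i
      rcases eq_or_ne i j with h | h
      · subst h
        have h2 : (-(a * σ)) ^ 2 = a ^ 2 * σ ^ 2 := by ring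
        simp [hy, hzj, h2, hσ2]
      · simp [hy, h]
    rw [Finset.sum_congr rfl fun i _ => e i, Finset.sum_add_distrib]
    simp [hN]
  have hsum_yc : ∑ i, y i * c i = P - a * |c j| := by
    have e : ∀ i, y i * c i = z i * c i + (if i = j then -(a * (σ * c j)) else 0) := by
      intro i
      rcases eq_or_ne i j with h | h
      · subst h; simp [hy, hzj]; ring
      · simp [hy, h]
    rw [Finset.sum_congr rfl fun i _ => e i, Finset.sum_add_distrib, huniv]
    simp [hσc]
    ring
  -- polarization
  have hxsupp : ∀ i ∉ insert j U, r * z i = 0 := by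
    intro i hi
    simp only [Finset.mem_insert, not_or] at hi
    rw [hzsupp i hi.2, mul_zero]
  have hysupp : ∀ i ∉ insert j U, y i = 0 := by
    intro i hi
    simp only [Finset.mem_insert, not_or] at hi
    simp [hy, hi.1, hzsupp i hi.2]
  have hcardins : (insert j U).card ≤ K := (Finset.card_insert_le _ _).trans hK
  have hpol := polar hRIP (fun i => r * z i) y (insert j U) hcardins hxsupp hysupp
  have l1 : ∑ i, (r * z i) * y i = r * N := by
    rw [← hsum_zy, Finset.mul_sum]
    exact Finset.sum_congr rfl fun i _ => by ring
  have l2 : ∑ i, (r * z i) ^ 2 = r ^ 2 * N := by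
    rw [hN, Finset.mul_sum]
    exact Finset.sum_congr rfl fun i _ => by ring
  have l3 : A.mulVec (fun i => r * z i) = fun l => r * (A.mulVec z) l := by
    funext l
    simp only [Matrix.mulVec, dotProduct, Finset.mul_sum]
    exact Finset.sum_congr rfl fun i _ => by ring
  have l4 : ∑ l, (A.mulVec (fun i => r * z i)) l * (A.mulVec y) l
      = r * (P - a * |c j|) := by
    rw [l3, ← hsum_yc]
    have : ∑ l, (r * (A.mulVec z) l) * (A.mulVec y) l
        = r * ∑ l, (A.mulVec y) l * (A.mulVec z) l := by
      rw [Finset.mul_sum]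
      exact Finset.sum_congr rfl fun l _ => by ring
    rw [this, sum_mulVec_mul A y (A.mulVec z)]
    congr 1
    exact Finset.sum_congr rfl fun i _ => by rw [hcdef]
  rw [l1, l2, hsum_yy, l4] at hpol
  have heq : r * N - δ / 2 * (r ^ 2 * N + (N + a ^ 2)) = r * (N - δ * r * N) := by
    linear_combination (δ / 2 * N) * hr2 - (δ / 2) * ha2 - (δ * N * r) * hr2 + (δ * N * r) * hr2
  rw [heq] at hpol
  have step : N - δ * r * N ≤ P - a * |c j| := (mul_le_mul_iff_right₀ hrpos).mp hpol
  have hfin : (1 - r * δ) * N ≤ u * a - a * |c j| := by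
    have e : (1 - r * δ) * N = (N - δ * r * N) := by ring
    rw [e]
    linarith [hPu, step]
  rcases eq_or_lt_of_le hN0 with h0 | hNpos
  · -- degenerate case N = 0
    have hsum0 : ∑ i, z i ^ 2 = 0 := by rw [← hN, ← h0]
    have hz0 : ∀ i, z i = 0 := by
      intro i
      have h' := (Finset.sum_eq_zero_iff_of_nonneg
        (fun i _ => sq_nonneg (z i))).mp hsum0 i (Finset.mem_univ i)
      exact (pow_eq_zero_iff two_ne_zero).mp h'
    have hzf : z = 0 := funext hz0
    have hc0 : c j = 0 := by
      rw [hcdef, hzf]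
      simp [Matrix.mulVec_zero]
    rw [← h0, Real.sqrt_zero]
    rw [hc0, abs_zero]
    simp only [mul_zero, sub_zero]
    linarith
  · -- main case N > 0
    have hspos : (0 : ℝ) < s := by linarith
    have hapos : 0 < a := by
      rw [ha]
      exact Real.sqrt_pos.mpr (mul_pos hspos hNpos)
    have hsq : Real.sqrt s ≠ 0 := ne_of_gt (Real.sqrt_pos.mpr hspos)
    have hsa : a = Real.sqrt s * Real.sqrt N := by rw [ha, Real.sqrt_mul hs0]
    have hNN : Real.sqrt N * Real.sqrt N = N := Real.mul_self_sqrt hN0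
    rw [ge_iff_le]
    have hRa : 1 / Real.sqrt s * ((1 - r * δ) * Real.sqrt N) * a = (1 - r * δ) * N := by
      rw [hsa]
      calc 1 / Real.sqrt s * ((1 - r * δ) * Real.sqrt N) * (Real.sqrt s * Real.sqrt N)
          = (1 - r * δ) * (Real.sqrt N * Real.sqrt N) *
            (Real.sqrt s * (1 / Real.sqrt s)) := by ring
        _ = (1 - r * δ) * N := by
            rw [hNN, mul_one_div, div_self hsq, mul_one]
    have final : 1 / Real.sqrt s * ((1 - r * δ) * Real.sqrt N) * a ≤ (u - |c j|) * a := by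
      rw [hRa]
      have e2 : (u - |c j|) * a = u * a - a * |c j| := by ring
      rw [e2]
      exact hfin
    exact le_of_mul_le_mul_right final hapos

/-- Main lemma: if `A` satisfies the RIP of order `k+b+1` with constant `δ`,
`Λ ⊆ T ∪ T₀`, `|T ∪ Λ| = k+b`, `|T \ Λ| = k−g−t ≥ 1`, and `z̃` is supported on `T ∪ Λ`
with `A_Λᵀ A z̃ = 0`, then
`max_{i∈T\Λ} |⟨Ae_i, Az̃⟩| − max_{i∉T∪Λ} |⟨Ae_i, Az̃⟩|
  ≥ (1/√(k−g−t))(1 − √(k−g−t+1) δ)‖z̃‖₂`. -/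
theorem stmt4 (m n k g b t : ℕ) (hgt : g + t < k)
    (A : Matrix (Fin m) (Fin n) ℝ) (δ : ℝ)
    (hRIP : RIP A (k + b + 1) δ)
    (T Λ T₀ : Finset (Fin n)) (hΛ : Λ ⊆ T ∪ T₀)
    (hcard : (T ∪ Λ).card = k + b) (hTΛ : (T \ Λ).card = k - g - t)
    (z : Fin n → ℝ) (hzsupp : ∀ i ∉ T ∪ Λ, z i = 0)
    (horth : ∀ i ∈ Λ, (∑ l, A l i * (A.mulVec z) l) = 0)
    (h1 : (T \ Λ).Nonempty) (h2 : ((T ∪ Λ)ᶜ).Nonempty) :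
    ((T \ Λ).sup' h1 fun i => |∑ l, A l i * (A.mulVec z) l|) -
      (((T ∪ Λ)ᶜ).sup' h2 fun i => |∑ l, A l i * (A.mulVec z) l|) ≥
    (1 / Real.sqrt ((k : ℝ) - g - t)) *
      ((1 - Real.sqrt ((k : ℝ) - g - t + 1) * δ) * Real.sqrt (∑ i, z i ^ 2)) := by
  have hcast : ((k : ℝ) - g - t) = (((T \ Λ).card : ℕ) : ℝ) := by
    rw [hTΛ, Nat.sub_sub, Nat.cast_sub hgt.le]
    push_cast; ring
  rw [hcast]
  exact key A δ hRIP (T ∪ Λ) (T \ Λ) (by rw [hcard])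
    z (fun i => ∑ l, A l i * (A.mulVec z) l) (fun i => rfl)
    hzsupp
    (fun i hiU hiS => by
      apply horth
      rcases Finset.mem_union.mp hiU with h | h
      · by_contra hΛi
        exact hiS (Finset.mem_sdiff.mpr ⟨h, hΛi⟩)
      · exact h)
    h1 h2
end

section
/- Let K ≥ 1 and consider the block matrix AᵀA ∈ ℝ^{(k+b+1)×(k+b+1)} where A has a (k−g)×(k−g) block √(K/(K+1))·I with K = k−g, an identity block I_{g+b+1}, and a last column with entries 1/√((K+1)K) in the first k−g rows. Then the eigenvalues of AᵀA are K/(K+1) with multiplicity k−g−1, 1 with multiplicity g+b, and 1 ± 1/√(K+1), each with multiplicity 1. -/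
open scoped BigOperators Polynomial

open Matrix Polynomial

private lemma sum_ite_lt_const {n : ℕ} (K : ℕ) (hK : K ≤ n) (v : ℝ) :
    (∑ i : Fin n, if (i : ℕ) < K then v else 0) = K * v := by
  rw [Fin.sum_univ_eq_sum_range (fun i => if i < K then v else 0) n]
  rw [← Finset.sum_subset (Finset.range_subset_range.2 hK)
      (fun x _ hx => if_neg (by simpa using hx))]
  rw [Finset.sum_congr rfl (fun x hx => if_pos (Finset.mem_range.1 hx)),
    Finset.sum_const, Finset.card_range, nsmul_eq_mul]

private lemma prod_ite_lt_const {m : ℕ} (K : ℕ) (hK : K ≤ m) (u v : ℝ) :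
    (∏ i ∈ Finset.range m, if i < K then u else v) = u ^ K * v ^ (m - K) := by
  rw [Finset.range_eq_Ico, ← Finset.prod_Ico_consecutive _ (Nat.zero_le K) hK]
  rw [Finset.prod_congr rfl (fun x hx => if_pos (Finset.mem_Ico.1 hx).2),
    Finset.prod_congr (rfl : Finset.Ico K m = _) (fun x hx => if_neg (by
      have := (Finset.mem_Ico.1 hx).1; omega))]
  simp [Nat.card_Ico]

private lemma arrow_det (m K : ℕ) (hK1 : 1 ≤ K) (hKm : K ≤ m) (c a x : ℝ) (hx : x ≠ c)
    (M : Matrix (Fin (m+1)) (Fin (m+1)) ℝ)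
    (hM : ∀ p q : Fin (m+1), M p q =
      (if p = q then (if (p : ℕ) < K then c else 1) else 0)
      + (if (p : ℕ) < K ∧ (q : ℕ) = m then a else 0)
      + (if (q : ℕ) < K ∧ (p : ℕ) = m then a else 0)
      + (if (p : ℕ) = m ∧ (q : ℕ) = m then a else 0)) :
    (Matrix.of fun p q : Fin (m+1) => (if p = q then x else 0) - M p q).det
      = (x - c) ^ (K - 1) * (x - 1) ^ (m - K) * ((x - c) * (x - (1+a)) - K * a ^ 2) := by
  have hxc : x - c ≠ 0 := sub_ne_zero.2 hx
  set t := a / (x - c) with ht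
  set N := Matrix.of fun p q : Fin (m+1) => (if p = q then x else 0) - M p q with hN
  set w := (x - (1+a)) - K * a^2 / (x - c) with hw
  set E := Matrix.of fun p q : Fin (m+1) =>
    (if p = q then (1:ℝ) else 0) + (if (p:ℕ) < K ∧ (q:ℕ) = m then t else 0) with hE
  set L := Matrix.of fun p q : Fin (m+1) =>
    if p = q then (if (p:ℕ) < K then x - c else if (p:ℕ) = m then w else x - 1)
    else if (q:ℕ) < K ∧ (p:ℕ) = m then -a else 0 with hL
  -- branch lemmas for N
  have hNd1 : ∀ p : Fin (m+1), (p:ℕ) < K → N p p = x - c := by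
    intro p hp
    have h1 : ¬ ((p:ℕ) = m) := by omega
    simp [hN, hM, hp, h1]
  have hNd2 : ∀ p : Fin (m+1), ¬ (p:ℕ) < K → (p:ℕ) ≠ m → N p p = x - 1 := by
    intro p hp h1
    simp [hN, hM, hp, h1]
  have hNd3 : ∀ p : Fin (m+1), (p:ℕ) = m → N p p = x - (1+a) := by
    intro p hp
    have h1 : ¬ ((p:ℕ) < K) := by omega
    simp [hN, hM, hp, h1, show ¬ m < K from by omega]
  have hNo : ∀ p q : Fin (m+1), p ≠ q → N p q =
      -((if (p:ℕ) < K ∧ (q:ℕ) = m then a else 0) + (if (q:ℕ) < K ∧ (p:ℕ) = m then a else 0)) := by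
    intro p q hpq
    have h4 : ¬ ((p:ℕ) = m ∧ (q:ℕ) = m) := by
      rintro ⟨h1, h2⟩; exact hpq (Fin.ext (h1.trans h2.symm))
    simp [hN, hM, hpq, h4]
  have hNE : N * E = L := by
    ext p q
    rw [Matrix.mul_apply]
    have expand : ∀ j, N p j * E j q = N p j * (if j = q then (1:ℝ) else 0)
        + N p j * (if (j:ℕ) < K ∧ (q:ℕ) = m then t else 0) := by
      intro j; simp only [hE, Matrix.of_apply]; ring
    rw [Finset.sum_congr rfl (fun j _ => expand j), Finset.sum_add_distrib]
    have hfirst : (∑ j, N p j * (if j = q then (1:ℝ) else 0)) = N p q := by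
      simp [mul_ite, mul_one, mul_zero]
    rw [hfirst]
    by_cases hq : (q:ℕ) = m
    · simp only [hq, and_true]
      by_cases hp : (p:ℕ) < K
      · have hpq : p ≠ q := by intro h; rw [h, hq] at hp; omega
        have hsum : (∑ j, N p j * (if (j:ℕ) < K then t else 0)) = a := by
          rw [Finset.sum_eq_single p]
          · rw [hNd1 p hp, if_pos hp, ht]; field_simp
          · intro j _ hjp
            by_cases hj : (j:ℕ) < K
            · have : N p j = 0 := by
                rw [hNo p j (Ne.symm hjp)]
                have h1 : ¬ ((j:ℕ) = m) := by omega
                have h2 : ¬ ((p:ℕ) = m) := by omega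
                simp [h1, h2]
              simp [this]
            · simp [hj]
          · simp
        rw [hsum, hNo p q hpq]
        have h1 : ¬ ((q:ℕ) < K) := by omega
        have h2 : ¬ ((p:ℕ) = m) := by omega
        simp [hL, hpq, hp, hq, h1, h2]
      · by_cases hpm : (p:ℕ) = m
        · have hpq : p = q := Fin.ext (hpm.trans hq.symm)
          have hsum : (∑ j, N p j * (if (j:ℕ) < K then t else 0)) = K * (-a * t) := by
            rw [← sum_ite_lt_const (n := m+1) K (by omega) (-a * t)]
            refine Finset.sum_congr rfl (fun j _ => ?_)
            by_cases hj : (j:ℕ) < K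
            · have hjp : j ≠ p := by intro h; rw [h, hpm] at hj; omega
              have : N p j = -a := by
                rw [hNo p j (Ne.symm hjp)]
                have h1 : ¬ ((p:ℕ) < K) := hp
                have h2 : ¬ ((j:ℕ) = m) := by omega
                simp [hj, hpm, h2, h1]
              simp [this, hj]
            · simp [hj]
          rw [hsum, ← hpq, hNd3 p hpm]
          have h1 : ¬ ((p:ℕ) < K) := hp
          simp only [hL, Matrix.of_apply, if_pos (rfl : p = p), if_neg h1, if_pos hpm, if_true, hw, ht]
          field_simp
          ring
        · have hsum : (∑ j, N p j * (if (j:ℕ) < K then t else 0)) = 0 := by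
            refine Finset.sum_eq_zero (fun j _ => ?_)
            by_cases hj : (j:ℕ) < K
            · have hjp : j ≠ p := by intro h; rw [h] at hj; omega
              have : N p j = 0 := by
                rw [hNo p j (Ne.symm hjp)]
                have h2 : ¬ ((j:ℕ) = m) := by omega
                simp [hp, h2, hpm]
              simp [this]
            · simp [hj]
          rw [hsum]
          have hpq : p ≠ q := by intro h; rw [h, hq] at hpm; exact hpm rfl
          rw [hNo p q hpq]
          have h1 : ¬ ((q:ℕ) < K) := by omega
          simp [hL, hpq, hp, h1, hpm]
    · have hsum : (∑ j, N p j * (if (j:ℕ) < K ∧ (q:ℕ) = m then t else 0)) = 0 := by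
        refine Finset.sum_eq_zero (fun j _ => ?_)
        simp [hq]
      rw [hsum, add_zero]
      by_cases hpq : p = q
      · subst hpq
        by_cases hp : (p:ℕ) < K
        · rw [hNd1 p hp]; simp [hL, hp]
        · rw [hNd2 p hp hq]; simp [hL, hp, hq]
      · rw [hNo p q hpq]
        simp only [hq, and_false, if_false, add_zero]
        by_cases h2 : (q:ℕ) < K ∧ (p:ℕ) = m
        · simp [hL, hpq, h2]
        · simp [hL, hpq, h2]
  have hdE : E.det = 1 := by
    have htri : E.BlockTriangular id := by
      intro i j hij
      have hij' : (j:ℕ) < (i:ℕ) := hij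
      have h1 : i ≠ j := by intro h; rw [h] at hij'; omega
      have h2 : ¬ ((i:ℕ) < K ∧ (j:ℕ) = m) := by
        rintro ⟨ha', hb'⟩; omega
      simp [hE, h1, h2]
    rw [Matrix.det_of_upperTriangular htri]
    refine Finset.prod_eq_one (fun i _ => ?_)
    have h1 : ¬ ((i:ℕ) < K ∧ (i:ℕ) = m) := by rintro ⟨ha', hb'⟩; omega
    simp [hE, h1]
  have hdL : L.det = ∏ i, L i i := by
    refine Matrix.det_of_lowerTriangular L ?_
    intro i j hij
    have hij' : (i:ℕ) < (j:ℕ) := hij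
    have h1 : i ≠ j := by intro h; rw [h] at hij'; omega
    have h2 : ¬ ((j:ℕ) < K ∧ (i:ℕ) = m) := by rintro ⟨ha', hb'⟩; omega
    simp [hL, h1, h2]
  have hprod : (∏ i, L i i) = (x - c)^K * (x - 1)^(m - K) * w := by
    have hdiag : ∀ i : Fin (m+1), L i i =
        (fun i : ℕ => if i < K then x - c else if i = m then w else x - 1) (i:ℕ) := by
      intro i; simp [hL]
    rw [Finset.prod_congr rfl (fun i _ => hdiag i),
      Fin.prod_univ_eq_prod_range (fun i : ℕ => if i < K then x - c else if i = m then w else x - 1) (m+1),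
      Finset.prod_range_succ]
    have hm1 : ¬ (m < K) := by omega
    rw [if_neg hm1, if_pos rfl]
    rw [Finset.prod_congr rfl (fun i hi => ?_), prod_ite_lt_const K hKm (x - c) (x - 1)]
    · have hi' : i < m := Finset.mem_range.1 hi
      by_cases h : i < K
      · simp [h]
      · have : i ≠ m := by omega
        simp [h, this]
  calc N.det = (N * E).det := by rw [Matrix.det_mul, hdE, mul_one]
    _ = L.det := by rw [hNE]
    _ = ∏ i, L i i := hdL
    _ = (x - c)^K * (x - 1)^(m - K) * w := hprod
    _ = (x - c) ^ (K - 1) * (x - 1) ^ (m - K) * ((x - c) * (x - (1+a)) - K * a ^ 2) := by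
        rw [show K = (K-1)+1 by omega]
        simp only [Nat.add_sub_cancel]
        rw [pow_succ, hw, Nat.sub_add_cancel hK1]
        field_simp

/-- Eigenvalues of `AᵀA` for the sharpness construction: the characteristic polynomial of
`AᵀA` is `(X − (K/(K+1)))^{k−g−1} (X − 1)^{g+b} (X − (1 − 1/√(K+1))) (X − (1 + 1/√(K+1)))`
with `K = k − g`. -/
theorem stmt6 (k g b : ℕ) (hg : g < k)
    (A : Matrix (Fin (k + b + 1)) (Fin (k + b + 1)) ℝ)
    (hA : ∀ i j : Fin (k + b + 1), A i j =
      if i = j then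
        (if (i : ℕ) < k - g then Real.sqrt (((k : ℝ) - g) / ((k : ℝ) - g + 1)) else 1)
      else if (j : ℕ) = k + b ∧ (i : ℕ) < k - g then
        1 / Real.sqrt ((((k : ℝ) - g + 1)) * ((k : ℝ) - g))
      else 0) :
    (A.transpose * A).charpoly =
      (Polynomial.X - Polynomial.C (((k : ℝ) - g) / ((k : ℝ) - g + 1))) ^ (k - g - 1) *
      (Polynomial.X - Polynomial.C (1 : ℝ)) ^ (g + b) *
      (Polynomial.X - Polynomial.C (1 - 1 / Real.sqrt ((k : ℝ) - g + 1))) *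
      (Polynomial.X - Polynomial.C (1 + 1 / Real.sqrt ((k : ℝ) - g + 1))) := by
  have hgk : g ≤ k := hg.le
  set Kr : ℝ := (k:ℝ) - g with hKr
  have hKr1 : (1:ℝ) ≤ Kr := by
    have h1 : (g:ℝ) + 1 ≤ k := by exact_mod_cast hg
    rw [hKr]; linarith
  have hKrpos : (0:ℝ) < Kr := lt_of_lt_of_le one_pos hKr1
  have hKr1pos : (0:ℝ) < Kr + 1 := by linarith
  set c := Kr / (Kr + 1) with hc
  set a := (1:ℝ) / (Kr + 1) with ha
  set sc := Real.sqrt (Kr / (Kr + 1)) with hsc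
  set sa := (1:ℝ) / Real.sqrt ((Kr + 1) * Kr) with hsa
  set s := (1:ℝ) / Real.sqrt (Kr + 1) with hs
  have hKcast : ((k - g : ℕ) : ℝ) = Kr := by rw [hKr, Nat.cast_sub hgk]
  -- sqrt facts
  have hscsc : sc * sc = c := by rw [hsc, hc]; exact Real.mul_self_sqrt (by positivity)
  have hsasa : sa * sa = 1 / ((Kr + 1) * Kr) := by
    rw [hsa, div_mul_div_comm, one_mul, Real.mul_self_sqrt (by positivity)]
  have hss : s * s = 1 / (Kr + 1) := by
    rw [hs, div_mul_div_comm, one_mul, Real.mul_self_sqrt (by positivity)]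
  have hscsa : sc * sa = a := by
    have hfrac : Kr / (Kr + 1) / ((Kr + 1) * Kr) = ((1:ℝ) / (Kr + 1)) ^ 2 := by
      field_simp
    rw [hsc, hsa, mul_one_div, ← Real.sqrt_div (by positivity), hfrac,
      Real.sqrt_sq (by positivity), ha]
  have hKsa : ((k - g : ℕ) : ℝ) * (sa * sa) = a := by
    rw [hKcast, hsasa, ha]
    field_simp
  -- entrywise description of A
  have hA' : ∀ i j : Fin (k + b + 1), A i j =
      (if i = j then (if (i:ℕ) < k - g then sc else 1) else 0)
      + (if (i:ℕ) < k - g then sa else 0) * (if (j:ℕ) = k + b then (1:ℝ) else 0) := by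
    intro i j
    rw [hA i j]
    by_cases hij : i = j
    · subst hij
      by_cases hiK : (i:ℕ) < k - g
      · have h1 : (i:ℕ) ≠ k + b := by omega
        simp [hiK, h1]
      · simp [hiK]
    · simp only [if_neg hij]
      by_cases hj : (j:ℕ) = k + b
      · by_cases hi : (i:ℕ) < k - g
        · simp [hj, hi]
        · simp [hj, hi]
      · simp [hj]
  -- entries of AᵀA
  have hMeq : ∀ p q : Fin (k + b + 1), (A.transpose * A) p q =
      (if p = q then (if (p:ℕ) < k - g then c else 1) else 0)
      + (if (p:ℕ) < k - g ∧ (q:ℕ) = k + b then a else 0)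
      + (if (q:ℕ) < k - g ∧ (p:ℕ) = k + b then a else 0)
      + (if (p:ℕ) = k + b ∧ (q:ℕ) = k + b then a else 0) := by
    intro p q
    rw [Matrix.mul_apply]
    simp only [Matrix.transpose_apply]
    have expand : ∀ i : Fin (k + b + 1), A i p * A i q =
        (if i = p then (if (i:ℕ) < k - g then sc else 1) else 0)
          * (if i = q then (if (i:ℕ) < k - g then sc else 1) else 0)
        + (if i = p then (if (i:ℕ) < k - g then sc else 1) else 0)
          * ((if (i:ℕ) < k - g then sa else 0) * (if (q:ℕ) = k + b then (1:ℝ) else 0))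
        + ((if (i:ℕ) < k - g then sa else 0) * (if (p:ℕ) = k + b then (1:ℝ) else 0))
          * (if i = q then (if (i:ℕ) < k - g then sc else 1) else 0)
        + ((if (i:ℕ) < k - g then sa else 0) * (if (i:ℕ) < k - g then sa else 0))
          * ((if (p:ℕ) = k + b then (1:ℝ) else 0) * (if (q:ℕ) = k + b then (1:ℝ) else 0)) := by
      intro i; rw [hA' i p, hA' i q]; ring
    rw [Finset.sum_congr rfl (fun i _ => expand i), Finset.sum_add_distrib,
      Finset.sum_add_distrib, Finset.sum_add_distrib]
    have hT1 : (∑ i : Fin (k + b + 1),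
        (if i = p then (if (i:ℕ) < k - g then sc else 1) else 0)
          * (if i = q then (if (i:ℕ) < k - g then sc else 1) else 0))
        = (if p = q then (if (p:ℕ) < k - g then c else 1) else 0) := by
      by_cases hpq : p = q
      · subst hpq
        rw [Finset.sum_congr rfl (fun i _ => show _ = if i = p then
            (if (i:ℕ) < k - g then sc else 1) * (if (i:ℕ) < k - g then sc else 1) else 0 by
          by_cases h : i = p <;> simp [h]),
          Finset.sum_ite_eq' Finset.univ p
            (fun i => (if (i:ℕ) < k - g then sc else 1) * (if (i:ℕ) < k - g then sc else 1))]
        by_cases hp : (p:ℕ) < k - g <;> simp [hp, hscsc]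
      · rw [if_neg hpq]
        refine Finset.sum_eq_zero (fun i _ => ?_)
        by_cases h1 : i = p
        · have h2 : i ≠ q := fun h => hpq (h1.symm.trans h)
          simp [h2]
        · simp [h1]
    have hT2 : (∑ i : Fin (k + b + 1),
        (if i = p then (if (i:ℕ) < k - g then sc else 1) else 0)
          * ((if (i:ℕ) < k - g then sa else 0) * (if (q:ℕ) = k + b then (1:ℝ) else 0)))
        = (if (p:ℕ) < k - g ∧ (q:ℕ) = k + b then a else 0) := by
      rw [Finset.sum_congr rfl (fun i _ => show _ = if i = p then
          (if (i:ℕ) < k - g then sc else 1) * ((if (i:ℕ) < k - g then sa else 0)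
            * (if (q:ℕ) = k + b then (1:ℝ) else 0)) else 0 by
        by_cases h : i = p <;> simp [h]),
        Finset.sum_ite_eq' Finset.univ p (fun i => (if (i:ℕ) < k - g then sc else 1)
          * ((if (i:ℕ) < k - g then sa else 0) * (if (q:ℕ) = k + b then (1:ℝ) else 0)))]
      by_cases hp : (p:ℕ) < k - g
      · by_cases hq : (q:ℕ) = k + b
        · simp [hp, hq, hscsa]
        · simp [hp, hq]
      · simp [hp]
    have hT3 : (∑ i : Fin (k + b + 1),
        ((if (i:ℕ) < k - g then sa else 0) * (if (p:ℕ) = k + b then (1:ℝ) else 0))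
          * (if i = q then (if (i:ℕ) < k - g then sc else 1) else 0))
        = (if (q:ℕ) < k - g ∧ (p:ℕ) = k + b then a else 0) := by
      have hpt : ∀ i : Fin (k + b + 1),
          ((if (i:ℕ) < k - g then sa else 0) * (if (p:ℕ) = k + b then (1:ℝ) else 0))
            * (if i = q then (if (i:ℕ) < k - g then sc else 1) else 0)
          = (if i = q then ((if (i:ℕ) < k - g then sa else 0)
              * (if (p:ℕ) = k + b then (1:ℝ) else 0)) * (if (i:ℕ) < k - g then sc else 1)
            else 0) := by
        intro i; by_cases h : i = q <;> simp [h]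
      rw [Finset.sum_congr rfl (fun i _ => hpt i),
        Finset.sum_ite_eq' Finset.univ q (fun i => ((if (i:ℕ) < k - g then sa else 0)
          * (if (p:ℕ) = k + b then (1:ℝ) else 0)) * (if (i:ℕ) < k - g then sc else 1))]
      by_cases hq : (q:ℕ) < k - g
      · by_cases hp : (p:ℕ) = k + b
        · rw [if_pos (⟨hq, hp⟩ : _ ∧ _)]
          simp only [Finset.mem_univ, if_true, if_pos hq, if_pos hp, mul_one]
          rw [mul_comm]; exact hscsa
        · simp [hp, hq]
      · simp [hq]
    have hT4 : (∑ i : Fin (k + b + 1),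
        ((if (i:ℕ) < k - g then sa else 0) * (if (i:ℕ) < k - g then sa else 0))
          * ((if (p:ℕ) = k + b then (1:ℝ) else 0) * (if (q:ℕ) = k + b then (1:ℝ) else 0)))
        = (if (p:ℕ) = k + b ∧ (q:ℕ) = k + b then a else 0) := by
      have hpt : ∀ i : Fin (k + b + 1),
          ((if (i:ℕ) < k - g then sa else 0) * (if (i:ℕ) < k - g then sa else 0))
            * ((if (p:ℕ) = k + b then (1:ℝ) else 0) * (if (q:ℕ) = k + b then (1:ℝ) else 0))
          = (if (i:ℕ) < k - g then (sa * sa) * ((if (p:ℕ) = k + b then (1:ℝ) else 0)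
              * (if (q:ℕ) = k + b then (1:ℝ) else 0)) else 0) := by
        intro i; by_cases h : (i:ℕ) < k - g <;> simp [h]
      rw [Finset.sum_congr rfl (fun i _ => hpt i),
        sum_ite_lt_const (n := k + b + 1) (k - g) (by omega) _]
      by_cases hp : (p:ℕ) = k + b
      · by_cases hq : (q:ℕ) = k + b
        · rw [if_pos (⟨hp, hq⟩ : _ ∧ _)]
          simp only [if_pos hp, if_pos hq, mul_one]
          rw [← hKsa]
        · simp [hp, hq]
      · simp [hp]
    rw [hT1, hT2, hT3, hT4]
  -- characteristic polynomial via evaluation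
  apply Polynomial.eq_of_infinite_eval_eq
  apply Set.Infinite.mono (s := {c}ᶜ)
  · intro x hx
    have hxc : x ≠ c := by simpa using hx
    simp only [Set.mem_setOf_eq]
    have hcharval : eval x ((A.transpose * A).charpoly)
        = (Matrix.of fun p q : Fin (k + b + 1) =>
            (if p = q then x else 0) - (A.transpose * A) p q).det := by
      rw [Matrix.charpoly, ← Polynomial.coe_evalRingHom, RingHom.map_det]
      congr 1
      ext p q
      by_cases h : p = q
      · subst h; simp [Matrix.charmatrix_apply_eq]
      · simp [Matrix.charmatrix_apply_ne _ _ _ h, h]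
    rw [hcharval,
      arrow_det (k + b) (k - g) (by omega) (by omega) c a x hxc (A.transpose * A) hMeq]
    simp only [eval_mul, eval_pow, eval_sub, eval_X, eval_C]
    rw [show k + b - (k - g) = g + b from by omega, hKcast]
    have key : (x - c) * (x - (1 + a)) - Kr * a ^ 2 = (x - (1 - s)) * (x - (1 + s)) := by
      have h2 : (x - (1 - s)) * (x - (1 + s)) = (x - 1) ^ 2 - s * s := by ring
      rw [h2, hss, hc, ha]
      field_simp
      ring
    rw [key]; ring
  · exact (Set.finite_singleton c).infinite_compl
end

section
/- The matrix A of the sharpness construction satisfies the RIP of order k+b+1 with restricted isometry constant exactly δ_{k+b+1} = 1/√(k−g+1). -/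
open scoped BigOperators

private lemma stmt7_core (M r : ℝ) (hr2 : r ^ 2 = M + 1) (hr1 : 1 < r) :
    ∀ Q s ℓ : ℝ, 0 ≤ Q → s ^ 2 ≤ M * Q →
      |(-Q + 2 * ℓ * s + ℓ ^ 2)| ≤ r * (Q + ℓ ^ 2) := by
  intro Q s ℓ hQ hs
  have hMQ : s ^ 2 ≤ (r ^ 2 - 1) * Q := by nlinarith
  rw [abs_le]
  constructor
  · nlinarith [sq_nonneg (s + (r + 1) * ℓ), sq_nonneg ℓ, hr1,
      mul_nonneg (le_of_lt (show (0:ℝ) < r - 1 by linarith)) hQ]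
  · nlinarith [sq_nonneg (s - (r - 1) * ℓ), sq_nonneg ℓ, hr1,
      mul_nonneg (le_of_lt (show (0:ℝ) < r - 1 by linarith)) hQ]

set_option maxHeartbeats 2000000 in
/-- The matrix of the sharpness construction satisfies the RIP of order `k+b+1` with
restricted isometry constant exactly `1/√(k−g+1)`. -/
theorem stmt7 (k g b : ℕ) (hg : g < k)
    (A : Matrix (Fin (k + b + 1)) (Fin (k + b + 1)) ℝ)
    (hA : ∀ i j : Fin (k + b + 1), A i j =
      if i = j then
        (if (i : ℕ) < k - g then Real.sqrt (((k : ℝ) - g) / ((k : ℝ) - g + 1)) else 1)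
      else if (j : ℕ) = k + b ∧ (i : ℕ) < k - g then
        1 / Real.sqrt ((((k : ℝ) - g + 1)) * ((k : ℝ) - g))
      else 0) :
    RIP A (k + b + 1) (1 / Real.sqrt ((k : ℝ) - g + 1)) ∧
    ∀ δ : ℝ, RIP A (k + b + 1) δ → 1 / Real.sqrt ((k : ℝ) - g + 1) ≤ δ := by
  classical
  set m := k - g with hmdef
  have hm1 : 1 ≤ m := by omega
  have hkg : ((k:ℝ) - (g:ℝ)) = (m:ℝ) := by
    rw [hmdef, Nat.cast_sub hg.le]
  set M : ℝ := (m:ℝ) with hMdef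
  have hM1 : (1:ℝ) ≤ M := by rw [hMdef]; exact_mod_cast hm1
  have hM0 : 0 < M := by linarith
  have hM10 : 0 < M + 1 := by linarith
  set r : ℝ := Real.sqrt (M + 1) with hrdef
  have hr0 : 0 ≤ r := Real.sqrt_nonneg _
  have hr2 : r ^ 2 = M + 1 := Real.sq_sqrt (le_of_lt hM10)
  have hr1 : 1 < r := by nlinarith
  have hrpos : 0 < r := by linarith
  have hr2pos : 0 < r ^ 2 := by positivity
  have hδ : 1 / Real.sqrt ((k:ℝ) - (g:ℝ) + 1) = 1 / r := by rw [hkg, hrdef]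
  set L : Fin (k + b + 1) := ⟨k + b, by omega⟩ with hLdef
  have hLm : ¬ ((L:ℕ) < m) := by
    simp only [hLdef]
    omega
  set d : ℝ := Real.sqrt (M / (M + 1)) with hddef
  set c : ℝ := 1 / Real.sqrt ((M + 1) * M) with hcdef
  have hd2 : d ^ 2 = M / (M + 1) := Real.sq_sqrt (by positivity)
  have hc2 : c ^ 2 = 1 / ((M + 1) * M) := by
    rw [hcdef, div_pow, one_pow, Real.sq_sqrt (by positivity)]
  have hdc : d * c = 1 / (M + 1) := by
    rw [hddef, hcdef, mul_one_div, ← Real.sqrt_div (by positivity)]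
    rw [show M / (M + 1) / ((M + 1) * M) = (1 / (M + 1)) ^ 2 by field_simp]
    exact Real.sqrt_sq (by positivity)
  -- mulVec formula
  have key : ∀ x : Fin (k+b+1) → ℝ, ∀ i : Fin (k+b+1),
      A.mulVec x i = if (i:ℕ) < m then d * x i + c * x L else x i := by
    intro x i
    simp only [Matrix.mulVec, dotProduct]
    by_cases hi : (i:ℕ) < m
    · have hiL : i ≠ L := by
        intro h; rw [h] at hi; exact hLm hi
      rw [if_pos hi]
      have hpt : ∀ j, A i j * x j =
          (if j = i then d * x i else 0) + (if j = L then c * x L else 0) := by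
        intro j
        rcases eq_or_ne j i with h | h
        · subst h
          rw [hA, if_pos rfl, if_pos hi, if_pos rfl, if_neg hiL, hkg, ← hddef, add_zero]
        · rcases eq_or_ne j L with h2 | h2
          · subst h2
            rw [hA, if_neg (fun hh => h hh.symm), if_pos ⟨rfl, hi⟩, if_neg h, if_pos rfl,
              hkg, ← hcdef, zero_add]
          · rw [hA, if_neg (fun hh => h hh.symm), if_neg, if_neg h, if_neg h2]
            · ring
            · rintro ⟨hj, -⟩
              exact h2 (Fin.ext hj)
      rw [Finset.sum_congr rfl fun j _ => hpt j, Finset.sum_add_distrib,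
        Finset.sum_ite_eq' Finset.univ i, Finset.sum_ite_eq' Finset.univ L]
      simp
    · rw [if_neg hi]
      have hpt : ∀ j, A i j * x j = if j = i then x i else 0 := by
        intro j
        rcases eq_or_ne j i with h | h
        · subst h
          rw [hA, if_pos rfl, if_neg hi, if_pos rfl, one_mul]
        · rw [hA, if_neg (fun hh => h hh.symm), if_neg (fun hh => hi hh.2), if_neg h,
            zero_mul]
      rw [Finset.sum_congr rfl fun j _ => hpt j, Finset.sum_ite_eq' Finset.univ i]
      simp
  set T : Finset (Fin (k+b+1)) := Finset.univ.filter (fun i => (i:ℕ) < m) with hTdef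
  have hmn : m ≤ k + b + 1 := by omega
  have hTcard : T.card = m := by
    have hTm : T = Finset.map (Fin.castLEEmb hmn) Finset.univ := by
      ext i
      rw [hTdef, Finset.mem_filter, Finset.mem_map]
      constructor
      · rintro ⟨-, h⟩
        exact ⟨⟨i, h⟩, Finset.mem_univ _, by ext; rfl⟩
      · rintro ⟨j, -, rfl⟩
        exact ⟨Finset.mem_univ _, by simpa using j.isLt⟩
    rw [hTm, Finset.card_map, Finset.card_univ, Fintype.card_fin]
  have hTcardR : (T.card : ℝ) = M := by rw [hTcard]
  have hLT : L ∈ Finset.univ.filter (fun i : Fin (k+b+1) => ¬ (i:ℕ) < m) := by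
    simp only [Finset.mem_filter, Finset.mem_univ, true_and]
    exact hLm
  -- the master sum formula
  have sumsq : ∀ x : Fin (k+b+1) → ℝ,
      (∑ i, (A.mulVec x) i ^ 2) = (∑ i, x i ^ 2) +
        (-(∑ i ∈ T, x i ^ 2) + 2 * x L * (∑ i ∈ T, x i) + x L ^ 2) / (M + 1) := by
    intro x
    have h1 : (∑ i, (A.mulVec x) i ^ 2)
        = (∑ i ∈ T, (d * x i + c * x L) ^ 2)
          + ∑ i ∈ Finset.univ.filter (fun i : Fin (k+b+1) => ¬ (i:ℕ) < m), x i ^ 2 := by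
      rw [← Finset.sum_filter_add_sum_filter_not Finset.univ (fun i : Fin (k+b+1) => (i:ℕ) < m)]
      congr 1
      · refine Finset.sum_congr rfl fun i hi => ?_
        rw [key, if_pos (Finset.mem_filter.mp hi).2]
      · refine Finset.sum_congr rfl fun i hi => ?_
        rw [key, if_neg (Finset.mem_filter.mp hi).2]
    have h2 : (∑ i, x i ^ 2) = (∑ i ∈ T, x i ^ 2)
        + ∑ i ∈ Finset.univ.filter (fun i : Fin (k+b+1) => ¬ (i:ℕ) < m), x i ^ 2 :=
      (Finset.sum_filter_add_sum_filter_not _ _ _).symm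
    have h3 : (∑ i ∈ T, (d * x i + c * x L) ^ 2)
        = (M/(M+1)) * (∑ i ∈ T, x i ^ 2) + (2/(M+1) * x L) * (∑ i ∈ T, x i)
          + M * (1/((M+1)*M) * x L ^ 2) := by
      have hterm : ∀ i ∈ T, (d * x i + c * x L) ^ 2
          = (M/(M+1)) * x i ^ 2 + (2/(M+1) * x L) * x i + (1/((M+1)*M) * x L ^ 2) := by
        intro i _
        have expand : (d * x i + c * x L) ^ 2
            = d ^ 2 * x i ^ 2 + 2 * (d * c) * x L * x i + c ^ 2 * x L ^ 2 := by ring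
        rw [expand, hd2, hc2, hdc]; ring
      rw [Finset.sum_congr rfl hterm, Finset.sum_add_distrib, Finset.sum_add_distrib,
        ← Finset.mul_sum, ← Finset.mul_sum, Finset.sum_const, nsmul_eq_mul, hTcardR]
    rw [h1, h3, h2]
    field_simp
    ring
  have cs : ∀ x : Fin (k+b+1) → ℝ, (∑ i ∈ T, x i) ^ 2 ≤ M * ∑ i ∈ T, x i ^ 2 := by
    intro x
    have := sq_sum_le_card_mul_sum_sq (s := T) (f := x)
    rwa [hTcardR] at this
  have hVQ : ∀ x : Fin (k+b+1) → ℝ, (∑ i ∈ T, x i ^ 2) + x L ^ 2 ≤ ∑ i, x i ^ 2 := by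
    intro x
    have hsplit := Finset.sum_filter_add_sum_filter_not Finset.univ
      (fun i : Fin (k+b+1) => (i:ℕ) < m) (fun i => x i ^ 2)
    have hL2 : x L ^ 2 ≤ ∑ i ∈ Finset.univ.filter (fun i : Fin (k+b+1) => ¬ (i:ℕ) < m), x i ^ 2 :=
      Finset.single_le_sum (fun i _ => sq_nonneg (x i)) hLT
    calc (∑ i ∈ T, x i ^ 2) + x L ^ 2
        ≤ (∑ i ∈ T, x i ^ 2)
          + ∑ i ∈ Finset.univ.filter (fun i : Fin (k+b+1) => ¬ (i:ℕ) < m), x i ^ 2 := by linarith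
      _ = ∑ i, x i ^ 2 := hsplit
  have core := stmt7_core M r hr2 hr1
  clear_value d c r M T L
  constructor
  · -- RIP holds with δ = 1/r
    rw [hδ]
    intro x _
    set Q := ∑ i ∈ T, x i ^ 2 with hQdef
    set s := ∑ i ∈ T, x i with hsdef
    set V := ∑ i, x i ^ 2 with hVdef
    have hQ0 : 0 ≤ Q := Finset.sum_nonneg fun i _ => sq_nonneg _
    have habs := core Q s (x L) hQ0 (cs x)
    have hQV : Q + x L ^ 2 ≤ V := hVQ x
    have habs' := abs_le.mp habs
    have hrV : r * (Q + x L ^ 2) ≤ r * V := mul_le_mul_of_nonneg_left hQV hr0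
    have hD1 : -(r * V) ≤ -Q + 2 * x L * s + x L ^ 2 := by linarith
    have hD2 : -Q + 2 * x L * s + x L ^ 2 ≤ r * V := by linarith
    rw [sumsq x]
    rw [← hr2]
    constructor
    · have heq : V + (-Q + 2 * x L * s + x L ^ 2) / r ^ 2 - (1 - 1/r) * V
          = ((-Q + 2 * x L * s + x L ^ 2) + r * V) / r ^ 2 := by
        field_simp
        ring
      have : (0:ℝ) ≤ V + (-Q + 2 * x L * s + x L ^ 2) / r ^ 2 - (1 - 1/r) * V := by
        rw [heq]
        apply div_nonneg _ (le_of_lt hr2pos)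
        linarith
      linarith
    · have heq : (1 + 1/r) * V - (V + (-Q + 2 * x L * s + x L ^ 2) / r ^ 2)
          = (r * V - (-Q + 2 * x L * s + x L ^ 2)) / r ^ 2 := by
        field_simp
        ring
      have : (0:ℝ) ≤ (1 + 1/r) * V - (V + (-Q + 2 * x L * s + x L ^ 2) / r ^ 2) := by
        rw [heq]
        apply div_nonneg _ (le_of_lt hr2pos)
        linarith
      linarith
  · -- sharpness
    intro δ hRIP
    rw [hδ]
    set t : ℝ := (r - 1) / M with htdef
    set y : Fin (k+b+1) → ℝ := fun i => if (i:ℕ) < m then t else if i = L then 1 else 0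
      with hydef
    clear_value t y
    have hyL : y L = 1 := by
      simp [hydef, hLm]
    have hyT : ∀ i ∈ T, y i = t := by
      intro i hi
      rw [hTdef] at hi
      simp only [hydef]
      exact if_pos (Finset.mem_filter.mp hi).2
    have hQy : (∑ i ∈ T, y i ^ 2) = M * t ^ 2 := by
      rw [Finset.sum_congr rfl fun i hi => by rw [hyT i hi]]
      rw [Finset.sum_const, nsmul_eq_mul, hTcardR]
    have hsy : (∑ i ∈ T, y i) = M * t := by
      rw [Finset.sum_congr rfl fun i hi => by rw [hyT i hi]]
      rw [Finset.sum_const, nsmul_eq_mul, hTcardR]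
    have hVy : (∑ i, y i ^ 2) = M * t ^ 2 + 1 := by
      rw [← Finset.sum_filter_add_sum_filter_not Finset.univ
        (fun i : Fin (k+b+1) => (i:ℕ) < m) (fun i => y i ^ 2)]
      have hrest : (∑ i ∈ Finset.univ.filter (fun i : Fin (k+b+1) => ¬ (i:ℕ) < m), y i ^ 2)
          = 1 := by
        rw [Finset.sum_congr rfl (fun i hi => show y i ^ 2 = if i = L then 1 else 0 by
          have hi' := (Finset.mem_filter.mp hi).2
          simp only [hydef, if_neg hi']
          by_cases h : i = L <;> simp [h])]
        rw [Finset.sum_ite_eq' _ L (fun _ => (1:ℝ)), if_pos hLT]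
      rw [← hTdef, hrest, hQy]
    have hVypos : (0:ℝ) < ∑ i, y i ^ 2 := by
      rw [hVy]; nlinarith [sq_nonneg t]
    have hexact : (∑ i, (A.mulVec y) i ^ 2) = (1 + 1/r) * (∑ i, y i ^ 2) := by
      rw [sumsq y, hQy, hsy, hyL, hVy, htdef]
      have hMr : M = r ^ 2 - 1 := by linarith
      rw [hMr]
      have h1 : r ^ 2 - 1 ≠ 0 := ne_of_gt (by nlinarith)
      have h2 : r ≠ 0 := ne_of_gt hrpos
      field_simp
      ring
    have hub := (hRIP y ⟨Finset.univ, by simp, fun i hi => absurd (Finset.mem_univ i) hi⟩).2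
    rw [hexact] at hub
    have := (mul_le_mul_iff_of_pos_right hVypos).mp hub
    linarith
end

section
/- (Sharpness) For any positive integer k, integers 0 ≤ g < k and b ≥ 0, there exist a matrix A with δ_{k+b+1} = 1/√(k−g+1), a k-sparse vector x̄ with support T, |T| = k, and a prior support T₀ with |T∩T₀| = g, |T₀\T| = b, such that for the first OMP_{T₀} residual r⁰ = (I − P_{T₀}) A x̄, one has max_{i ∈ T\T₀} |⟨Ae_i, r⁰⟩| = max_{i ∉ T∪T₀} |⟨Ae_i, r⁰⟩| = (k−g)/(k−g+1); hence the algorithm may fail to select an index of T\T₀ in the first iteration. -/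
open scoped BigOperators

noncomputable def sharpA (n m : ℕ) : Matrix (Fin n) (Fin n) ℝ :=
  Matrix.of fun l i =>
    if (i : ℕ) < m then (if l = i then Real.sqrt ((m : ℝ)/((m:ℝ)+1)) else 0)
    else if (l : ℕ) < m then (if (i : ℕ) = n - 1 then Real.sqrt (1/((m:ℝ)*((m:ℝ)+1))) else 0)
    else (if l = i then 1 else 0)

lemma card_lt_filter (n a : ℕ) (h : a ≤ n) :
    (Finset.univ.filter (fun i : Fin n => (i : ℕ) < a)).card = a := by
  have he : (Finset.univ.filter (fun i : Fin n => (i : ℕ) < a)) =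
      Finset.map (Fin.castLEEmb h) Finset.univ := by
    ext i
    simp only [Finset.mem_filter, Finset.mem_univ, true_and, Finset.mem_map]
    constructor
    · intro hi
      exact ⟨⟨(i : ℕ), hi⟩, by ext; simp [Fin.castLEEmb, Fin.castLE]⟩
    · rintro ⟨j, -, rfl⟩
      simpa [Fin.castLEEmb, Fin.castLE] using j.isLt
  rw [he, Finset.card_map, Finset.card_univ, Fintype.card_fin]

lemma card_Ico_filter (n a c : ℕ) (hac : a ≤ c) (h : c ≤ n) :
    (Finset.univ.filter (fun i : Fin n => a ≤ (i : ℕ) ∧ (i : ℕ) < c)).card = c - a := by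
  have h1 : (Finset.univ.filter (fun i : Fin n => a ≤ (i : ℕ) ∧ (i : ℕ) < c)) =
      (Finset.univ.filter (fun i : Fin n => (i : ℕ) < c)) \
      (Finset.univ.filter (fun i : Fin n => (i : ℕ) < a)) := by
    ext i; simp only [Finset.mem_filter, Finset.mem_sdiff, Finset.mem_univ, true_and]
    omega
  have hsub : (Finset.univ.filter (fun i : Fin n => (i : ℕ) < a)) ⊆
      (Finset.univ.filter (fun i : Fin n => (i : ℕ) < c)) := by
    intro i; simp only [Finset.mem_filter, Finset.mem_univ, true_and]; omega
  rw [h1, Finset.card_sdiff_of_subset hsub, card_lt_filter n a (le_trans hac h), card_lt_filter n c h]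

lemma sharpA_mulVec (n m : ℕ) (hm : 0 < m) (hmn : m < n) (x : Fin n → ℝ) (l : Fin n) :
    (sharpA n m).mulVec x l =
      if (l : ℕ) < m then Real.sqrt ((m : ℝ)/((m:ℝ)+1)) * x l
        + Real.sqrt (1/((m:ℝ)*((m:ℝ)+1))) * x ⟨n-1, by omega⟩ else x l := by
  set s := Real.sqrt ((m : ℝ)/((m:ℝ)+1)) with hs
  set c := Real.sqrt (1/((m:ℝ)*((m:ℝ)+1))) with hc
  set L : Fin n := ⟨n-1, by omega⟩ with hL
  have hLval : (L : ℕ) = n - 1 := rfl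
  have hmv : (sharpA n m).mulVec x l = ∑ i, sharpA n m l i * x i := rfl
  rw [hmv]
  by_cases hl : (l : ℕ) < m
  · have hlL : l ≠ L := by
      intro h; apply absurd hl; rw [h, hLval]; omega
    have hterm : ∀ i : Fin n, sharpA n m l i * x i
        = (if i = l then s * x i else 0) + (if i = L then c * x i else 0) := by
      intro i
      simp only [sharpA, Matrix.of_apply, ← hs, ← hc]
      by_cases hi : (i : ℕ) < m
      · have hiL : i ≠ L := by
          intro h; apply absurd hi; rw [h, hLval]; omega
        by_cases hil : i = l
        · rw [if_pos hi, if_pos hil.symm, if_pos hil, if_neg hiL, add_zero]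
        · rw [if_pos hi, if_neg (fun h => hil h.symm), if_neg hil, if_neg hiL, zero_mul,
            add_zero]
      · by_cases hiL : i = L
        · have hival : (i : ℕ) = n - 1 := by rw [hiL]
          rw [if_neg hi, if_pos hl, if_pos hival,
            if_neg (show i ≠ l by rw [hiL]; exact fun h => hlL h.symm),
            if_pos hiL, zero_add]
        · have hival : (i : ℕ) ≠ n - 1 := fun h => hiL (Fin.ext (by rw [h, hLval]))
          have hil : i ≠ l := fun h => hi (h ▸ hl)
          rw [if_neg hi, if_pos hl, if_neg hival, if_neg hil, if_neg hiL, zero_mul, add_zero]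
    rw [if_pos hl, Finset.sum_congr rfl (fun i _ => hterm i), Finset.sum_add_distrib,
      Finset.sum_ite_eq' Finset.univ l (fun i => s * x i),
      Finset.sum_ite_eq' Finset.univ L (fun i => c * x i)]
    simp
  · have hterm : ∀ i : Fin n, sharpA n m l i * x i = (if i = l then x i else 0) := by
      intro i
      simp only [sharpA, Matrix.of_apply, ← hs, ← hc]
      by_cases hi : (i : ℕ) < m
      · have hil : i ≠ l := by intro h; rw [← h] at hl; exact hl hi
        rw [if_pos hi, if_neg (fun h => hil h.symm), if_neg hil, zero_mul]
      · by_cases hil : i = l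
        · rw [if_neg hi, if_neg hl, if_pos hil.symm, if_pos hil, one_mul]
        · rw [if_neg hi, if_neg hl, if_neg (fun h => hil h.symm), if_neg hil, zero_mul]
    rw [if_neg hl, Finset.sum_congr rfl (fun i _ => hterm i),
      Finset.sum_ite_eq' Finset.univ l (fun i => x i)]
    simp

lemma key1 (t Q S v : ℝ) (ht : 1 ≤ t) (hQ : 0 ≤ Q) (hS : S^2 ≤ (t^2 - 1) * Q) :
    2*v*S ≤ (t+1)*Q + (t-1)*v^2 := by
  have hB : 0 ≤ (t+1)*Q + (t-1)*v^2 := by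
    have := mul_nonneg (by linarith : (0:ℝ) ≤ t+1) hQ
    have := mul_nonneg (by linarith : (0:ℝ) ≤ t-1) (sq_nonneg v)
    linarith
  have hsq : (2*v*S)^2 ≤ ((t+1)*Q + (t-1)*v^2)^2 := by
    nlinarith [sq_nonneg ((t+1)*Q - (t-1)*v^2), mul_nonneg (sq_nonneg v) (sub_nonneg.2 hS)]
  nlinarith [hsq, hB]

lemma key2 (t Q S v : ℝ) (ht : 1 ≤ t) (hQ : 0 ≤ Q) (hS : S^2 ≤ (t^2 - 1) * Q) :
    -(2*v*S) ≤ (t-1)*Q + (t+1)*v^2 := by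
  have hB : 0 ≤ (t-1)*Q + (t+1)*v^2 := by
    have := mul_nonneg (by linarith : (0:ℝ) ≤ t-1) hQ
    have := mul_nonneg (by linarith : (0:ℝ) ≤ t+1) (sq_nonneg v)
    linarith
  have hsq : (2*v*S)^2 ≤ ((t-1)*Q + (t+1)*v^2)^2 := by
    nlinarith [sq_nonneg ((t-1)*Q - (t+1)*v^2), mul_nonneg (sq_nonneg v) (sub_nonneg.2 hS)]
  nlinarith [hsq, hB]


lemma sharpA_rip (n m : ℕ) (hm : 0 < m) (hmn : m < n) (K : ℕ) :
    RIP (sharpA n m) K (1 / Real.sqrt ((m:ℝ)+1)) := by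
  intro x _
  set s := Real.sqrt ((m : ℝ)/((m:ℝ)+1)) with hs
  set c := Real.sqrt (1/((m:ℝ)*((m:ℝ)+1))) with hc
  set t := Real.sqrt ((m:ℝ)+1) with htdef
  set L : Fin n := ⟨n-1, by omega⟩ with hLdef
  have hm1 : (0:ℝ) < (m:ℝ) := by exact_mod_cast hm
  have ht2 : t^2 = (m:ℝ)+1 := Real.sq_sqrt (by linarith)
  have ht1 : 1 ≤ t := by
    have h := Real.sqrt_le_sqrt (show (1:ℝ) ≤ (m:ℝ)+1 by linarith)
    rwa [Real.sqrt_one] at h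
  have ht0 : 0 < t := by linarith
  set P := fun l : Fin n => (l : ℕ) < m with hP
  set Q := ∑ l ∈ Finset.univ.filter P, x l ^ 2 with hQdef
  set S := ∑ l ∈ Finset.univ.filter P, x l with hSdef
  set R := ∑ l ∈ Finset.univ.filter (fun l => ¬ P l), x l ^ 2 with hRdef
  set v := x L with hv
  have hcard : (Finset.univ.filter P).card = m := card_lt_filter n m (by omega)
  have hQ0 : 0 ≤ Q := Finset.sum_nonneg fun l _ => sq_nonneg _
  have hvR : v^2 ≤ R := by
    apply Finset.single_le_sum (f := fun l => x l ^ 2) (fun l _ => sq_nonneg (x l))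
    simp only [Finset.mem_filter, Finset.mem_univ, true_and, hP]
    show ¬ ((L : ℕ) < m)
    show ¬ (n - 1 < m)
    omega
  have hS2 : S^2 ≤ (t^2-1) * Q := by
    have h := sq_sum_le_card_mul_sum_sq (s := Finset.univ.filter P) (f := x)
    rw [hcard] at h
    rw [show t^2 - 1 = (m:ℝ) by linarith]
    exact_mod_cast h
  have hxsum : ∑ l, x l ^2 = Q + R := (Finset.sum_filter_add_sum_filter_not _ _ _).symm
  have hs2 : s^2 = (m:ℝ)/((m:ℝ)+1) := Real.sq_sqrt (by positivity)
  have hc2 : c^2 = 1/((m:ℝ)*((m:ℝ)+1)) := Real.sq_sqrt (by positivity)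
  have hsc : s*c = 1/((m:ℝ)+1) := by
    rw [hs, hc, ← Real.sqrt_mul (by positivity),
      show (m:ℝ)/((m:ℝ)+1) * (1/((m:ℝ)*((m:ℝ)+1))) = (1/((m:ℝ)+1))^2 by field_simp,
      Real.sqrt_sq (by positivity)]
  have hAx : ∑ l, ((sharpA n m).mulVec x) l ^2
      = s^2 * Q + 2*(s*c)*v*S + (m:ℝ)*(c^2*v^2) + R := by
    rw [Finset.sum_congr rfl (fun l _ => by rw [sharpA_mulVec n m hm hmn x l] :
      ∀ l ∈ Finset.univ, ((sharpA n m).mulVec x) l ^2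
        = (if P l then s * x l + c * v else x l)^2),
      ← Finset.sum_filter_add_sum_filter_not Finset.univ P]
    have e1 : ∑ l ∈ Finset.univ.filter P, (if P l then s * x l + c * v else x l)^2
        = s^2*Q + 2*(s*c)*v*S + (m:ℝ)*(c^2*v^2) := by
      rw [Finset.sum_congr rfl (fun l hl => by
        rw [if_pos (Finset.mem_filter.1 hl).2,
          show (s * x l + c * v)^2 = s^2*(x l)^2 + (2*(s*c)*v)*(x l) + c^2*v^2 by ring] :
        ∀ l ∈ Finset.univ.filter P, (if P l then s * x l + c * v else x l)^2
          = s^2*(x l)^2 + (2*(s*c)*v)*(x l) + c^2*v^2),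
        Finset.sum_add_distrib, Finset.sum_add_distrib, ← Finset.mul_sum, ← Finset.mul_sum,
        Finset.sum_const, hcard, nsmul_eq_mul]
    have e2 : ∑ l ∈ Finset.univ.filter (fun l => ¬ P l),
        (if P l then s * x l + c * v else x l)^2 = R := by
      exact Finset.sum_congr rfl (fun l hl => by
        rw [if_neg (Finset.mem_filter.1 hl).2])
    rw [e1, e2]
  have hEq : (s^2 * Q + 2*(s*c)*v*S + (m:ℝ)*(c^2*v^2) + R) * t^2
      = (t^2-1)*Q + 2*v*S + v^2 + t^2*R := by
    rw [hs2, hsc, hc2, ht2]; field_simp; ring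
  have htpos : (0:ℝ) < t^2 := by positivity
  have htR : 0 ≤ t*(R - v^2) := mul_nonneg ht0.le (by linarith)
  constructor
  · rw [hxsum, hAx]
    refine (mul_le_mul_iff_of_pos_right htpos).mp ?_
    rw [hEq, show ((1 - 1/t) * (Q+R)) * t^2 = (t^2-t)*(Q+R) by field_simp]
    have hk := key2 t Q S v ht1 hQ0 hS2
    linarith [hk, htR]
  · rw [hxsum, hAx]
    refine (mul_le_mul_iff_of_pos_right htpos).mp ?_
    rw [hEq, show ((1 + 1/t) * (Q+R)) * t^2 = (t^2+t)*(Q+R) by field_simp]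
    have hk := key1 t Q S v ht1 hQ0 hS2
    linarith [hk, htR]

lemma sharpA_sharp (n m : ℕ) (hm : 0 < m) (hmn : m < n) (K : ℕ) (hK : n ≤ K) (δ : ℝ)
    (h : RIP (sharpA n m) K δ) : 1 / Real.sqrt ((m:ℝ)+1) ≤ δ := by
  set s := Real.sqrt ((m : ℝ)/((m:ℝ)+1)) with hs
  set c := Real.sqrt (1/((m:ℝ)*((m:ℝ)+1))) with hc
  set t := Real.sqrt ((m:ℝ)+1) with htdef
  set L : Fin n := ⟨n-1, by omega⟩ with hLdef
  have hm1 : (0:ℝ) < (m:ℝ) := by exact_mod_cast hm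
  have ht2 : t^2 = (m:ℝ)+1 := Real.sq_sqrt (by linarith)
  have ht1 : 1 ≤ t := by
    have h' := Real.sqrt_le_sqrt (show (1:ℝ) ≤ (m:ℝ)+1 by linarith)
    rwa [Real.sqrt_one] at h'
  have ht0 : 0 < t := by linarith
  have hs2 : s^2 = (m:ℝ)/((m:ℝ)+1) := Real.sq_sqrt (by positivity)
  have hc2 : c^2 = 1/((m:ℝ)*((m:ℝ)+1)) := Real.sq_sqrt (by positivity)
  have hsc : s*c = 1/((m:ℝ)+1) := by
    rw [hs, hc, ← Real.sqrt_mul (by positivity),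
      show (m:ℝ)/((m:ℝ)+1) * (1/((m:ℝ)*((m:ℝ)+1))) = (1/((m:ℝ)+1))^2 by field_simp,
      Real.sqrt_sq (by positivity)]
  set P := fun l : Fin n => (l : ℕ) < m with hP
  have hcard : (Finset.univ.filter P).card = m := card_lt_filter n m (by omega)
  have hLP : ¬ P L := by show ¬ (n - 1 < m); omega
  set y : Fin n → ℝ := fun i => if P i then 1 else if i = L then t+1 else 0 with hy
  have hy1 : ∀ l, P l → y l = 1 := fun l hl => by simp [hy, hl]
  have hy0 : ∀ l, ¬ P l → y l = if l = L then t+1 else 0 := fun l hl => by simp [hy, hl]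
  have hyL : y L = t + 1 := by rw [hy0 L hLP, if_pos rfl]
  obtain ⟨-, h2⟩ := h y ⟨Finset.univ, by simpa using hK, fun i hi => absurd (Finset.mem_univ i) hi⟩
  have hy2 : ∑ l, y l ^ 2 = (m:ℝ) + (t+1)^2 := by
    rw [← Finset.sum_filter_add_sum_filter_not Finset.univ P]
    have e1 : ∑ l ∈ Finset.univ.filter P, y l ^ 2 = (m:ℝ) := by
      rw [Finset.sum_congr rfl (fun l hl => by
          rw [hy1 l (Finset.mem_filter.1 hl).2, one_pow] :
        ∀ l ∈ Finset.univ.filter P, y l ^ 2 = 1),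
        Finset.sum_const, hcard, nsmul_eq_mul, mul_one]
    have e2 : ∑ l ∈ Finset.univ.filter (fun l => ¬ P l), y l ^ 2 = (t+1)^2 := by
      rw [Finset.sum_congr rfl (fun l hl => by
          rw [hy0 l (Finset.mem_filter.1 hl).2]
          split_ifs <;> norm_num :
        ∀ l ∈ Finset.univ.filter (fun l => ¬ P l), y l ^ 2
          = if l = L then (t+1)^2 else 0),
        Finset.sum_ite_eq' (Finset.univ.filter (fun l => ¬ P l)) L (fun _ => (t+1)^2),
        if_pos (by simp only [Finset.mem_filter, Finset.mem_univ, true_and]; exact hLP)]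
    rw [e1, e2]
  have hAy : ∑ l, ((sharpA n m).mulVec y) l ^ 2
      = (m:ℝ) * (s + c*(t+1))^2 + (t+1)^2 := by
    rw [Finset.sum_congr rfl (fun l _ => by rw [sharpA_mulVec n m hm hmn y l] :
        ∀ l ∈ Finset.univ, ((sharpA n m).mulVec y) l ^2
          = (if P l then s * y l + c * y L else y l)^2),
      ← Finset.sum_filter_add_sum_filter_not Finset.univ P]
    have e1 : ∑ l ∈ Finset.univ.filter P, (if P l then s * y l + c * y L else y l)^2
        = (m:ℝ) * (s + c*(t+1))^2 := by
      rw [Finset.sum_congr rfl (fun l hl => by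
          have hPl := (Finset.mem_filter.1 hl).2
          rw [if_pos hPl, hyL, hy1 l hPl, mul_one] :
        ∀ l ∈ Finset.univ.filter P, (if P l then s * y l + c * y L else y l)^2
          = (s + c*(t+1))^2),
        Finset.sum_const, hcard, nsmul_eq_mul]
    have e2 : ∑ l ∈ Finset.univ.filter (fun l => ¬ P l),
        (if P l then s * y l + c * y L else y l)^2 = (t+1)^2 := by
      rw [Finset.sum_congr rfl (fun l hl => by
          rw [if_neg (Finset.mem_filter.1 hl).2, hy0 l (Finset.mem_filter.1 hl).2]
          split_ifs <;> norm_num :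
        ∀ l ∈ Finset.univ.filter (fun l => ¬ P l),
          (if P l then s * y l + c * y L else y l)^2 = if l = L then (t+1)^2 else 0),
        Finset.sum_ite_eq' (Finset.univ.filter (fun l => ¬ P l)) L (fun _ => (t+1)^2),
        if_pos (by simp only [Finset.mem_filter, Finset.mem_univ, true_and]; exact hLP)]
    rw [e1, e2]
  rw [hy2, hAy] at h2
  have hmt : (m:ℝ) = t^2 - 1 := by linarith
  have hval : (m:ℝ) * (s + c*(t+1))^2 = (t+1)^2 := by
    have e : ((m:ℝ) * (s + c*(t+1))^2) * ((m:ℝ)+1) = ((m:ℝ)+t+1)^2 := by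
      rw [show (s + c*(t+1))^2 = s^2 + 2*(s*c)*(t+1) + c^2*(t+1)^2 by ring,
        hs2, hsc, hc2]
      field_simp
      ring
    have e2 : ((m:ℝ)+t+1)^2 = (t+1)^2 * ((m:ℝ)+1) := by rw [hmt]; ring
    have hne : ((m:ℝ)+1) ≠ 0 := by linarith
    have := e.trans e2
    exact mul_right_cancel₀ hne this
  rw [hval, hmt] at h2
  rw [div_le_iff₀ ht0]
  nlinarith [h2, ht0, ht1, mul_pos ht0 ht0]

lemma sharpA_dot (n m : ℕ) (hm : 0 < m) (hmn : m < n) (i : Fin n) :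
    ∑ l, sharpA n m l i * (if (l:ℕ) < m then Real.sqrt ((m:ℝ)/((m:ℝ)+1)) else 0)
      = if (i:ℕ) < m then (m:ℝ)/((m:ℝ)+1)
        else if (i:ℕ) = n-1 then (m:ℝ)/((m:ℝ)+1) else 0 := by
  set s := Real.sqrt ((m : ℝ)/((m:ℝ)+1)) with hs
  set c := Real.sqrt (1/((m:ℝ)*((m:ℝ)+1))) with hc
  have hm1 : (0:ℝ) < (m:ℝ) := by exact_mod_cast hm
  have hs2 : s^2 = (m:ℝ)/((m:ℝ)+1) := Real.sq_sqrt (by positivity)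
  have hsc : s*c = 1/((m:ℝ)+1) := by
    rw [hs, hc, ← Real.sqrt_mul (by positivity),
      show (m:ℝ)/((m:ℝ)+1) * (1/((m:ℝ)*((m:ℝ)+1))) = (1/((m:ℝ)+1))^2 by field_simp,
      Real.sqrt_sq (by positivity)]
  have hcard : (Finset.univ.filter (fun l : Fin n => (l:ℕ) < m)).card = m :=
    card_lt_filter n m (by omega)
  by_cases hi : (i:ℕ) < m
  · rw [if_pos hi]
    have hterm : ∀ l : Fin n, sharpA n m l i * (if (l:ℕ) < m then s else 0)
        = if l = i then s * s else 0 := by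
      intro l
      simp only [sharpA, Matrix.of_apply, ← hs, ← hc]
      by_cases hl : (l:ℕ) < m
      · rw [show (if (l:ℕ) < m then s else 0) = s from if_pos hl, if_pos hi]
        by_cases hli : l = i
        · rw [if_pos hli, if_pos hli]
        · rw [if_neg hli, if_neg hli, zero_mul]
      · have hli : l ≠ i := fun h => hl (by rw [h]; exact hi)
        rw [show (if (l:ℕ) < m then s else 0) = 0 from if_neg hl, mul_zero, if_neg hli]
    rw [Finset.sum_congr rfl (fun l _ => hterm l),
      Finset.sum_ite_eq' Finset.univ i (fun _ => s * s), if_pos (Finset.mem_univ i),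
      ← sq, hs2]
  · rw [if_neg hi]
    by_cases hiv : (i:ℕ) = n - 1
    · rw [if_pos hiv]
      have hterm : ∀ l : Fin n, sharpA n m l i * (if (l:ℕ) < m then s else 0)
          = if (l:ℕ) < m then c * s else 0 := by
        intro l
        simp only [sharpA, Matrix.of_apply, ← hs, ← hc]
        by_cases hl : (l:ℕ) < m
        · rw [show (if (l:ℕ) < m then s else 0) = s from if_pos hl, if_neg hi, if_pos hl,
            if_pos hiv, if_pos hl]
        · rw [show (if (l:ℕ) < m then s else 0) = 0 from if_neg hl, mul_zero, if_neg hl]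
      rw [Finset.sum_congr rfl (fun l _ => hterm l), Finset.sum_ite, Finset.sum_const_zero,
        add_zero, Finset.sum_const, hcard, nsmul_eq_mul,
        show c * s = s * c from mul_comm c s, hsc]
      field_simp
    · rw [if_neg hiv]
      apply Finset.sum_eq_zero
      intro l _
      simp only [sharpA, Matrix.of_apply, ← hs, ← hc]
      by_cases hl : (l:ℕ) < m
      · rw [show (if (l:ℕ) < m then s else 0) = s from if_pos hl, if_neg hi, if_pos hl,
          if_neg hiv, zero_mul]
      · rw [show (if (l:ℕ) < m then s else 0) = 0 from if_neg hl, mul_zero]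

/-- Sharpness: for any `k > g ≥ 0` and `b ≥ 0`, there exist a matrix `A` with restricted
isometry constant of order `k+b+1` exactly `1/√(k−g+1)`, a `k`-sparse `x̄` with support
`T`, `|T| = k`, and a prior support `T₀` with `|T∩T₀| = g`, `|T₀\T| = b`, such that the
first OMP residual `r⁰ = (I − P_{T₀})Ax̄` satisfies
`|⟨Ae_i, r⁰⟩| = (k−g)/(k−g+1)` both for all `i ∈ T\T₀` and for all `i ∉ T∪T₀`; hence the
algorithm may fail to select an index of `T\T₀` in the first iteration. -/
theorem stmt8 (k g b : ℕ) (hg : g < k) :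
    ∃ (A : Matrix (Fin (k + b + 1)) (Fin (k + b + 1)) ℝ)
      (xb : Fin (k + b + 1) → ℝ) (T T₀ : Finset (Fin (k + b + 1)))
      (r0 : Fin (k + b + 1) → ℝ),
      RIP A (k + b + 1) (1 / Real.sqrt ((k : ℝ) - g + 1)) ∧
      (∀ δ : ℝ, RIP A (k + b + 1) δ → 1 / Real.sqrt ((k : ℝ) - g + 1) ≤ δ) ∧
      (∀ i, xb i ≠ 0 ↔ i ∈ T) ∧ T.card = k ∧ (T ∩ T₀).card = g ∧ (T₀ \ T).card = b ∧
      (∃ w : Fin (k + b + 1) → ℝ, (∀ i ∉ T₀, w i = 0) ∧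
        r0 = A.mulVec xb - A.mulVec w ∧ ∀ i ∈ T₀, (∑ l, A l i * r0 l) = 0) ∧
      (∀ i ∈ T \ T₀, |∑ l, A l i * r0 l| = ((k : ℝ) - g) / ((k : ℝ) - g + 1)) ∧
      (∀ i ∉ T ∪ T₀, |∑ l, A l i * r0 l| = ((k : ℝ) - g) / ((k : ℝ) - g + 1)) := by
  have hkg : ((k:ℝ) - (g:ℝ)) = ((k - g : ℕ) : ℝ) := (Nat.cast_sub hg.le).symm
  set n := k + b + 1 with hn
  set m := k - g with hmdef
  have hm : 0 < m := by omega
  have hmn : m < n := by omega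
  have hmpos : (0:ℝ) < (m:ℝ) := by exact_mod_cast hm
  set s := Real.sqrt ((m : ℝ)/((m:ℝ)+1)) with hs
  refine ⟨sharpA n m, fun i => if (i:ℕ) < k then 1 else 0,
    Finset.univ.filter (fun i : Fin n => (i:ℕ) < k),
    Finset.univ.filter (fun i : Fin n => m ≤ (i:ℕ) ∧ (i:ℕ) < k + b),
    fun l => if (l:ℕ) < m then s else 0,
    ?_, ?_, ?_, ?_, ?_, ?_, ?_, ?_, ?_⟩
  · rw [hkg]
    exact sharpA_rip n m hm hmn n
  · intro δ hδ
    rw [hkg]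
    exact sharpA_sharp n m hm hmn n le_rfl δ hδ
  · intro i
    simp only [Finset.mem_filter, Finset.mem_univ, true_and]
    by_cases hik : (i:ℕ) < k <;> simp [hik]
  · exact card_lt_filter n k (by omega)
  · have hset : (Finset.univ.filter (fun i : Fin n => (i:ℕ) < k)) ∩
        (Finset.univ.filter (fun i : Fin n => m ≤ (i:ℕ) ∧ (i:ℕ) < k + b))
        = Finset.univ.filter (fun i : Fin n => m ≤ (i:ℕ) ∧ (i:ℕ) < k) := by
      ext i
      simp only [Finset.mem_inter, Finset.mem_filter, Finset.mem_univ, true_and]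
      omega
    rw [hset, card_Ico_filter n m k (by omega) (by omega)]
    omega
  · have hset : (Finset.univ.filter (fun i : Fin n => m ≤ (i:ℕ) ∧ (i:ℕ) < k + b)) \
        (Finset.univ.filter (fun i : Fin n => (i:ℕ) < k))
        = Finset.univ.filter (fun i : Fin n => k ≤ (i:ℕ) ∧ (i:ℕ) < k + b) := by
      ext i
      simp only [Finset.mem_sdiff, Finset.mem_filter, Finset.mem_univ, true_and]
      omega
    rw [hset, card_Ico_filter n k (k+b) (by omega) (by omega)]
    omega
  · refine ⟨fun i => if m ≤ (i:ℕ) ∧ (i:ℕ) < k then 1 else 0, ?_, ?_, ?_⟩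
    · intro i hi
      simp only [Finset.mem_filter, Finset.mem_univ, true_and] at hi
      have hni : ¬(m ≤ (i:ℕ) ∧ (i:ℕ) < k) := by omega
      exact if_neg hni
    · funext l
      rw [Pi.sub_apply, sharpA_mulVec n m hm hmn _ l, sharpA_mulVec n m hm hmn _ l]
      have hLval : ((⟨n-1, by omega⟩ : Fin n) : ℕ) = n - 1 := rfl
      by_cases hl : (l:ℕ) < m
      · rw [if_pos hl, if_pos hl, if_pos hl,
          if_pos (show (l:ℕ) < k by omega), if_neg (show ¬ ((n-1:ℕ) < k) by omega),
          if_neg (show ¬ (m ≤ (l:ℕ) ∧ (l:ℕ) < k) by omega),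
          if_neg (show ¬ (m ≤ (n-1:ℕ) ∧ (n-1:ℕ) < k) by omega)]
        ring
      · rw [if_neg hl, if_neg hl, if_neg hl]
        by_cases hlk : (l:ℕ) < k
        · rw [if_pos hlk, if_pos (show m ≤ (l:ℕ) ∧ (l:ℕ) < k by omega)]
          norm_num
        · rw [if_neg hlk, if_neg (show ¬ (m ≤ (l:ℕ) ∧ (l:ℕ) < k) by omega)]
          norm_num
    · intro i hi
      simp only [Finset.mem_filter, Finset.mem_univ, true_and] at hi
      rw [show (∑ l, sharpA n m l i * (if (l:ℕ) < m then s else 0))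
          = _ from sharpA_dot n m hm hmn i,
        if_neg (show ¬ ((i:ℕ) < m) by omega), if_neg (show ¬ ((i:ℕ) = n - 1) by omega)]
  · intro i hi
    simp only [Finset.mem_sdiff, Finset.mem_filter, Finset.mem_univ, true_and] at hi
    rw [show (∑ l, sharpA n m l i * (if (l:ℕ) < m then s else 0))
        = _ from sharpA_dot n m hm hmn i,
      if_pos (show (i:ℕ) < m by omega), abs_of_nonneg (by positivity), hkg]
  · intro i hi
    simp only [Finset.mem_union, Finset.mem_filter, Finset.mem_univ, true_and, not_or] at hi
    have : (i:ℕ) = n - 1 := by have := i.isLt; omega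
    rw [show (∑ l, sharpA n m l i * (if (l:ℕ) < m then s else 0))
        = _ from sharpA_dot n m hm hmn i,
      if_neg (show ¬ ((i:ℕ) < m) by omega), if_pos this, abs_of_nonneg (by positivity), hkg]
end

section
/- (Support recovery under noise) Let y = Ax + v with ‖v‖₂ ≤ ε, x k-sparse with support T, |T| = k, prior support T₀ with |T∩T₀| = g < k, |T₀\T| = b. If δ_{k+b+1} < 1/√(k−g+1) and min_{i ∈ T\T₀} |x_i| > max{ √(2(1+δ_{k+b+1})) ε / (1 − √(k−g+1) δ_{k+b+1}), 2ε/√(1−δ_{k+b+1}) }, then OMP_{T₀} with stopping rule ‖r^t‖₂ ≤ ε selects exactly the indices of T\T₀ in exactly k−g iterations. -/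
open scoped BigOperators

private lemma abs_dot_le {ι : Type*} [Fintype ι] (f g : ι → ℝ) :
    |∑ i, f i * g i| ≤ Real.sqrt (∑ i, f i ^ 2) * Real.sqrt (∑ i, g i ^ 2) := by
  rcases abs_cases (∑ i, f i * g i) with ⟨h, _⟩ | ⟨h, _⟩
  · rw [h]; exact Real.sum_mul_le_sqrt_mul_sqrt _ f g
  · rw [h]
    have := Real.sum_mul_le_sqrt_mul_sqrt Finset.univ (fun i => -f i) g
    simpa [neg_mul, Finset.sum_neg_distrib] using this

private lemma dot_mulVec {m n : ℕ} (A : Matrix (Fin m) (Fin n) ℝ) (u : Fin n → ℝ)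
    (r : Fin m → ℝ) :
    (∑ l, (A.mulVec u) l * r l) = ∑ i, u i * (∑ l, A l i * r l) := by
  simp only [Matrix.mulVec, dotProduct, Finset.sum_mul, Finset.mul_sum]
  rw [Finset.sum_comm]
  apply Finset.sum_congr rfl; intro i _
  apply Finset.sum_congr rfl; intro l _
  ring

private lemma sq_sqrt_sum {ι : Type*} [Fintype ι] (f : ι → ℝ) :
    Real.sqrt (∑ i, f i ^ 2) ^ 2 = ∑ i, f i ^ 2 :=
  Real.sq_sqrt (Finset.sum_nonneg fun _ _ => sq_nonneg _)

private lemma polar_s11 {ι : Type*} [Fintype ι] (p q : ι → ℝ) :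
    (∑ l, (p l + q l) ^ 2) - (∑ l, (p l - q l) ^ 2) = 4 * ∑ l, p l * q l := by
  rw [← Finset.sum_sub_distrib, Finset.mul_sum]
  apply Finset.sum_congr rfl; intro l _; ring

private lemma mulVec_combo {m n : ℕ} (A : Matrix (Fin m) (Fin n) ℝ) (c d : ℝ)
    (f g : Fin n → ℝ) (l : Fin m) :
    (A.mulVec (fun i => c * f i + d * g i)) l = c * (A.mulVec f) l + d * (A.mulVec g) l := by
  simp only [Matrix.mulVec, dotProduct, Finset.mul_sum, ← Finset.sum_add_distrib]
  apply Finset.sum_congr rfl; intro i _; ring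

set_option maxHeartbeats 1000000 in
private lemma key_s11 {m n K : ℕ} {A : Matrix (Fin m) (Fin n) ℝ} {δ ε : ℝ}
    (hRIP : RIP A K δ) (hδ0 : 0 ≤ δ) (hε : 0 ≤ ε)
    (u : Fin n → ℝ) (v r : Fin m → ℝ)
    (Ω S : Finset (Fin n)) (hΩ : Ω.card < K) (hSΩ : S ⊆ Ω)
    (hu : ∀ i ∉ Ω, u i = 0) (hr : ∀ l, r l = (A.mulVec u) l + v l)
    (hvε : Real.sqrt (∑ l, v l ^ 2) ≤ ε)
    (hcorr : ∀ i ∈ Ω \ S, (∑ l, A l i * r l) = 0)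
    (hbig : Real.sqrt ((S.card : ℝ) + 1) * Real.sqrt (1 + δ) * ε
      < (1 - Real.sqrt ((S.card : ℝ) + 1) * δ) * Real.sqrt (∑ i ∈ S, u i ^ 2))
    (j : Fin n) (hmax : ∀ i, |∑ l, A l i * r l| ≤ |∑ l, A l j * r l|) :
    j ∈ S := by
  by_cases hjS : j ∈ S
  · exact hjS
  exfalso
  set corr : Fin n → ℝ := fun i => ∑ l, A l i * r l with hcorr_def
  set Nc : ℝ := ∑ i ∈ S, u i ^ 2 with hNc_def
  set Nu : ℝ := ∑ i, u i ^ 2 with hNu_def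
  set sq1 : ℝ := Real.sqrt ((S.card : ℝ) + 1) with hsq1_def
  have hNc0 : 0 ≤ Nc := Finset.sum_nonneg fun _ _ => sq_nonneg _
  have hNu0 : 0 ≤ Nu := Finset.sum_nonneg fun _ _ => sq_nonneg _
  have hNcNu : Nc ≤ Nu :=
    Finset.sum_le_sum_of_subset_of_nonneg (Finset.subset_univ S) fun i _ _ => sq_nonneg _
  have hsNcNu : Real.sqrt Nc ≤ Real.sqrt Nu := Real.sqrt_le_sqrt hNcNu
  have hsq1ge1 : 1 ≤ sq1 := by
    have h0 : (0:ℝ) ≤ (S.card : ℝ) := Nat.cast_nonneg _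
    have := Real.sqrt_le_sqrt (show (1:ℝ) ≤ (S.card : ℝ) + 1 by linarith)
    simpa [hsq1_def] using this
  have hsq10 : 0 < sq1 := lt_of_lt_of_le one_pos hsq1ge1
  clear_value Nc Nu sq1
  have h1δ : 0 < 1 - sq1 * δ := by
    by_contra hcon
    push_neg at hcon
    have h1 : 0 ≤ sq1 * Real.sqrt (1 + δ) * ε :=
      mul_nonneg (mul_nonneg (le_of_lt hsq10) (Real.sqrt_nonneg _)) hε
    have h2 : (1 - sq1 * δ) * Real.sqrt Nc ≤ 0 :=
      mul_nonpos_of_nonpos_of_nonneg (by linarith) (Real.sqrt_nonneg _)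
    linarith
  have hNcpos : 0 < Real.sqrt Nc := by
    rcases lt_or_eq_of_le (Real.sqrt_nonneg Nc) with h | h
    · exact h
    · exfalso
      have h1 : 0 ≤ sq1 * Real.sqrt (1 + δ) * ε :=
        mul_nonneg (mul_nonneg (le_of_lt hsq10) (Real.sqrt_nonneg _)) hε
      rw [← h] at hbig
      simp at hbig
      linarith
  have hδ1 : δ < 1 := by nlinarith
  -- restriction of the sum
  have hIA : (∑ i, u i * corr i) = ∑ i ∈ S, u i * corr i := by
    rw [← Finset.sum_subset (Finset.subset_univ Ω)
      (fun i _ hi => by rw [hu i hi, zero_mul])]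
    exact (Finset.sum_subset hSΩ fun i hiΩ hiS => by
      have hci : corr i = 0 := hcorr i (Finset.mem_sdiff.mpr ⟨hiΩ, hiS⟩)
      simp [hci]).symm
  have hAur : (∑ l, (A.mulVec u) l * r l) = ∑ i ∈ S, u i * corr i := by
    rw [dot_mulVec]; exact hIA
  -- Cauchy-Schwarz bound on the S-sum
  have hsum_le : ∑ i ∈ S, u i * corr i ≤
      Real.sqrt (S.card : ℝ) * Real.sqrt Nc * |corr j| := by
    calc ∑ i ∈ S, u i * corr i ≤ ∑ i ∈ S, |u i| * |corr j| := by
          apply Finset.sum_le_sum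
          intro i _
          calc u i * corr i ≤ |u i * corr i| := le_abs_self _
            _ = |u i| * |corr i| := abs_mul _ _
            _ ≤ |u i| * |corr j| := mul_le_mul_of_nonneg_left (hmax i) (abs_nonneg _)
      _ = (∑ i ∈ S, |u i|) * |corr j| := by rw [Finset.sum_mul]
      _ ≤ Real.sqrt (S.card : ℝ) * Real.sqrt Nc * |corr j| := by
          apply mul_le_mul_of_nonneg_right _ (abs_nonneg _)
          have h1 : ∑ i ∈ S, |u i| = ∑ i ∈ S, 1 * |u i| := by simp
          have h2 := Real.sum_mul_le_sqrt_mul_sqrt S (fun _ => (1:ℝ)) (fun i => |u i|)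
          simp only [one_pow, sq_abs, one_mul] at h2
          rw [h1]
          simpa [hNc_def, Finset.sum_const, nsmul_eq_mul, mul_one] using h2
  by_cases hjΩ : j ∈ Ω
  · -- the max index has zero correlation, so all correlations vanish
    have hcj : corr j = 0 := hcorr j (Finset.mem_sdiff.mpr ⟨hjΩ, hjS⟩)
    have hallz : ∀ i, corr i = 0 := by
      intro i
      have h : |corr i| ≤ |corr j| := hmax i
      rw [hcj, abs_zero] at h
      exact abs_eq_zero.mp (le_antisymm h (abs_nonneg _))
    have hz : (∑ l, (A.mulVec u) l * r l) = 0 := by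
      rw [hAur]
      exact Finset.sum_eq_zero fun i _ => by rw [hallz i, mul_zero]
    have hsplit : (∑ l, (A.mulVec u) l * r l)
        = (∑ l, (A.mulVec u) l ^ 2) + ∑ l, (A.mulVec u) l * v l := by
      rw [← Finset.sum_add_distrib]
      apply Finset.sum_congr rfl; intro l _
      rw [hr l]; ring
    have hrip := hRIP u ⟨Ω, le_of_lt hΩ, hu⟩
    rw [← hNu_def] at hrip
    have h1pδ : (0:ℝ) ≤ 1 + δ := by linarith
    have hAu2 : Real.sqrt (∑ l, (A.mulVec u) l ^ 2) ≤ Real.sqrt (1+δ) * Real.sqrt Nu := by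
      rw [← Real.sqrt_mul h1pδ Nu]
      exact Real.sqrt_le_sqrt hrip.2
    have hdv : |∑ l, (A.mulVec u) l * v l| ≤ (Real.sqrt (1+δ) * Real.sqrt Nu) * ε := by
      calc |∑ l, (A.mulVec u) l * v l|
          ≤ Real.sqrt (∑ l, (A.mulVec u) l ^ 2) * Real.sqrt (∑ l, v l ^ 2) := abs_dot_le _ _
        _ ≤ (Real.sqrt (1+δ) * Real.sqrt Nu) * ε :=
            mul_le_mul hAu2 hvε (Real.sqrt_nonneg _) (by positivity)
    have hlow : (1-δ) * Nu ≤ ∑ l, (A.mulVec u) l ^ 2 := hrip.1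
    have hc1 : Real.sqrt (1+δ) * ε ≤ sq1 * Real.sqrt (1+δ) * ε := by
      nlinarith [mul_nonneg (mul_nonneg (show (0:ℝ) ≤ sq1 - 1 by linarith)
        (Real.sqrt_nonneg (1+δ))) hε]
    have hc2 : (1 - sq1*δ) * Real.sqrt Nc ≤ (1-δ) * Real.sqrt Nu := by
      apply mul_le_mul (by nlinarith) hsNcNu (Real.sqrt_nonneg _) (by linarith)
    have hkey0 : Real.sqrt (1+δ) * ε < (1-δ) * Real.sqrt Nu := by linarith
    have hNusq : Real.sqrt Nu ^ 2 = Nu := Real.sq_sqrt hNu0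
    have hNupos : 0 < Real.sqrt Nu := lt_of_lt_of_le hNcpos hsNcNu
    have hss : Real.sqrt Nu * Real.sqrt Nu = Nu := Real.mul_self_sqrt hNu0
    have e1 : Real.sqrt Nu * ((1-δ)*Real.sqrt Nu - Real.sqrt (1+δ)*ε)
        = (1-δ)*Nu - Real.sqrt (1+δ)*Real.sqrt Nu*ε := by
      linear_combination (1-δ) * hss
    have e2 := mul_pos hNupos (sub_pos.mpr hkey0)
    rw [e1] at e2
    have e3 := neg_abs_le (∑ l, (A.mulVec u) l * v l)
    linarith
  · -- main case : j outside T ∪ Λ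
    set s : ℝ := if 0 ≤ corr j then 1 else -1 with hs_def
    have hs2 : s^2 = 1 := by rw [hs_def]; split <;> norm_num
    have hsc : s * corr j = |corr j| := by
      by_cases h : 0 ≤ corr j
      · rw [hs_def, if_pos h, one_mul, abs_of_nonneg h]
      · rw [hs_def, if_neg h, neg_one_mul, abs_of_neg (not_le.mp h)]
    clear_value s
    set γ : ℝ := Real.sqrt (S.card : ℝ) * Real.sqrt Nc with hγ_def
    have hγ0 : 0 ≤ γ := by positivity
    have hγ2 : γ^2 = (S.card : ℝ) * Nc := by
      rw [hγ_def, mul_pow, Real.sq_sqrt (Nat.cast_nonneg _), Real.sq_sqrt hNc0]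
    clear_value γ
    set a : ℝ := Real.sqrt Nu with ha_def
    have ha0 : 0 < a := lt_of_lt_of_le hNcpos hsNcNu
    have ha2 : a^2 = Nu := Real.sq_sqrt hNu0
    have hsNca : Real.sqrt Nc ≤ a := hsNcNu
    clear_value a
    have hNcp : 0 < Nc := Real.sqrt_pos.mp hNcpos
    set G : ℝ := Real.sqrt (Nu + γ^2) with hG_def
    have hG2 : G^2 = Nu + γ^2 := Real.sq_sqrt (add_nonneg hNu0 (sq_nonneg _))
    have hG0 : 0 < G := by
      rw [hG_def]; apply Real.sqrt_pos.mpr; nlinarith [sq_nonneg γ]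
    have hGle : G ≤ sq1 * a := by
      rw [hG_def]
      have hcard0 : (0:ℝ) ≤ (S.card : ℝ) := Nat.cast_nonneg _
      have h1 : Nu + γ^2 ≤ ((S.card:ℝ)+1) * Nu := by rw [hγ2]; nlinarith
      calc Real.sqrt (Nu + γ^2) ≤ Real.sqrt (((S.card:ℝ)+1) * Nu) := Real.sqrt_le_sqrt h1
        _ = sq1 * a := by rw [Real.sqrt_mul (by positivity), hsq1_def, ha_def]
    clear_value G
    set μ : ℝ := a / G with hμ_def
    have hμ0 : 0 < μ := div_pos ha0 hG0
    set E : Fin n → ℝ := fun i => if i = j then 1 else 0 with hE_def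
    set h' : Fin n → ℝ := fun i => u i - (γ * s) * E i with hh_def
    have huj : u j = 0 := hu j hjΩ
    have hE2 : ∑ i, E i ^ 2 = 1 := by simp [hE_def, apply_ite (fun x : ℝ => x^2)]
    have huE : ∑ i, u i * E i = 0 := by
      simp [hE_def, mul_ite, huj]
    have hNcomb : ∀ α β : ℝ, (∑ i, (α * u i + β * E i)^2) = α^2 * Nu + β^2 := by
      intro α β
      have e : ∀ i, (α * u i + β * E i)^2
          = α^2 * u i^2 + (2*α*β) * (u i * E i) + β^2 * E i ^ 2 := fun i => by ring
      rw [Finset.sum_congr rfl fun i _ => e i, Finset.sum_add_distrib, Finset.sum_add_distrib,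
        ← Finset.mul_sum, ← Finset.mul_sum, ← Finset.mul_sum, huE, hE2, ← hNu_def]
      ring
    have hsupp : ∀ w : Fin n → ℝ, (∀ i, i ∉ Ω → i ≠ j → w i = 0) →
        ∃ S' : Finset (Fin n), S'.card ≤ K ∧ ∀ i ∉ S', w i = 0 := by
      intro w hw
      refine ⟨Ω ∪ {j}, ?_, ?_⟩
      · have := Finset.card_union_le Ω ({j} : Finset (Fin n))
        simp only [Finset.card_singleton] at this
        omega
      · intro i hi
        rw [Finset.mem_union, Finset.mem_singleton] at hi
        push_neg at hi
        exact hw i hi.1 hi.2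
    set P : Fin m → ℝ := A.mulVec h' with hP_def
    set Q : Fin m → ℝ := A.mulVec u with hQ_def
    set dPQ : ℝ := ∑ l, P l * Q l with hdPQ_def
    -- the two test vectors
    have hwp : ∀ i, μ * h' i + 1 * u i = (μ+1) * u i + (-(μ*γ*s)) * E i := fun i => by
      simp only [hh_def]; ring
    have hwm : ∀ i, μ * h' i + (-1) * u i = (μ-1) * u i + (-(μ*γ*s)) * E i := fun i => by
      simp only [hh_def]; ring
    have hms2 : ∀ c : ℝ, (-(c*γ*s))^2 = c^2*γ^2 := fun c => by
      have e : (-(c*γ*s))^2 = c^2*γ^2*s^2 := by ring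
      rw [e, hs2, mul_one]
    have hNwp : (∑ i, (μ * h' i + 1 * u i)^2) = (μ+1)^2 * Nu + μ^2*γ^2 := by
      rw [Finset.sum_congr rfl fun i _ => by rw [hwp i], hNcomb, hms2]
    have hNwm : (∑ i, (μ * h' i + (-1) * u i)^2) = (μ-1)^2 * Nu + μ^2*γ^2 := by
      rw [Finset.sum_congr rfl fun i _ => by rw [hwm i], hNcomb, hms2]
    have hsupp_w : ∀ c : ℝ, ∀ i, i ∉ Ω → i ≠ j → μ * h' i + c * u i = 0 := by
      intro c i hiΩ hij
      simp [hh_def, hE_def, hu i hiΩ, hij]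
    have hrip_p := hRIP (fun i => μ * h' i + 1 * u i) (hsupp (fun i => μ * h' i + 1 * u i)
      (fun i h1 h2 => hsupp_w 1 i h1 h2))
    have hrip_m := hRIP (fun i => μ * h' i + (-1) * u i) (hsupp (fun i => μ * h' i + (-1) * u i)
      (fun i h1 h2 => hsupp_w (-1) i h1 h2))
    have hmv_p : (∑ l, (A.mulVec (fun i => μ * h' i + 1 * u i)) l ^ 2)
        = ∑ l, (μ * P l + 1 * Q l)^2 :=
      Finset.sum_congr rfl fun l _ => by rw [mulVec_combo A μ 1 h' u l]
    have hmv_m : (∑ l, (A.mulVec (fun i => μ * h' i + (-1) * u i)) l ^ 2)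
        = ∑ l, (μ * P l + (-1) * Q l)^2 :=
      Finset.sum_congr rfl fun l _ => by rw [mulVec_combo A μ (-1) h' u l]
    have hR1 : (1-δ) * ((μ+1)^2 * Nu + μ^2*γ^2) ≤ ∑ l, (μ * P l + 1 * Q l)^2 := by
      have h := hrip_p.1
      rw [hmv_p] at h
      rw [← hNwp]
      exact h
    have hR2 : (∑ l, (μ * P l + (-1) * Q l)^2) ≤ (1+δ) * ((μ-1)^2 * Nu + μ^2*γ^2) := by
      have h := hrip_m.2
      rw [hmv_m] at h
      rw [← hNwm]
      exact h
    have hpol : (∑ l, (μ * P l + 1 * Q l)^2) - (∑ l, (μ * P l + (-1) * Q l)^2)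
        = 4 * (μ * dPQ) := by
      have h1 : (∑ l, (μ * P l + 1 * Q l)^2) = ∑ l, ((fun l => μ * P l) l + Q l)^2 :=
        Finset.sum_congr rfl fun l _ => by ring
      have h2 : (∑ l, (μ * P l + (-1) * Q l)^2) = ∑ l, ((fun l => μ * P l) l - Q l)^2 :=
        Finset.sum_congr rfl fun l _ => by ring
      rw [h1, h2, polar_s11]
      rw [show μ * dPQ = ∑ l, (fun l => μ * P l) l * Q l by
        rw [hdPQ_def, Finset.mul_sum]; exact Finset.sum_congr rfl fun l _ => by ring]
    have h4 : (1-δ)*((μ+1)^2*Nu + μ^2*γ^2) - (1+δ)*((μ-1)^2*Nu + μ^2*γ^2)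
        ≤ 4 * (μ * dPQ) := by
      rw [← hpol]
      exact sub_le_sub hR1 hR2
    have hγ2' : γ^2 = G^2 - a^2 := by rw [hG2, ha2]; ring
    have halg : (1-δ)*((μ+1)^2*Nu + μ^2*γ^2) - (1+δ)*((μ-1)^2*Nu + μ^2*γ^2)
        = 4*μ*Nu - 4*δ*a^2 := by
      rw [hμ_def, ← ha2, hγ2']
      field_simp
      ring
    have hμaG : μ * (a * G) = a^2 := by
      rw [hμ_def]
      field_simp
    have hPQ : Nu - δ*(a*G) ≤ dPQ := by
      have h5 : μ * (Nu - δ*(a*G)) = μ*Nu - δ*a^2 := by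
        linear_combination (-δ) * hμaG
      have h6 : μ * (Nu - δ*(a*G)) ≤ μ * dPQ := by
        rw [h5]; linarith [h4, halg.symm.le, halg.le]
      exact le_of_mul_le_mul_left h6 hμ0
    have hsupp_h := hsupp h' (fun i hiΩ hij => by simp [hh_def, hE_def, hu i hiΩ, hij])
    have hrip_h := hRIP h' hsupp_h
    have hNh : (∑ i, h' i ^ 2) = Nu + γ^2 := by
      have e : (∑ i, h' i ^ 2) = ∑ i, (1 * u i + (-(1*γ*s)) * E i)^2 :=
        Finset.sum_congr rfl fun i _ => by simp only [hh_def]; ring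
      rw [e, hNcomb, hms2]
      ring
    have h1pδ : (0:ℝ) ≤ 1 + δ := by linarith
    have hsP : Real.sqrt (∑ l, P l ^ 2) ≤ Real.sqrt (1+δ) * G := by
      have hPub : (∑ l, P l ^ 2) ≤ (1+δ) * (Nu + γ^2) := by
        rw [← hNh]; exact hrip_h.2
      calc Real.sqrt (∑ l, P l ^ 2) ≤ Real.sqrt ((1+δ) * (Nu + γ^2)) := Real.sqrt_le_sqrt hPub
        _ = Real.sqrt (1+δ) * G := by rw [Real.sqrt_mul h1pδ, hG_def]
    have hPv : -(Real.sqrt (1+δ) * G * ε) ≤ ∑ l, P l * v l := by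
      have h1 := abs_dot_le P v
      have h2 : Real.sqrt (∑ l, P l ^ 2) * Real.sqrt (∑ l, v l ^ 2)
          ≤ (Real.sqrt (1+δ) * G) * ε :=
        mul_le_mul hsP hvε (Real.sqrt_nonneg _)
          (mul_nonneg (Real.sqrt_nonneg _) (le_of_lt hG0))
      have h3 := neg_abs_le (∑ l, P l * v l)
      have h4' := le_trans h1 h2
      linarith
    have hPr : (∑ l, P l * r l) = dPQ + ∑ l, P l * v l := by
      rw [hdPQ_def, ← Finset.sum_add_distrib]
      apply Finset.sum_congr rfl; intro l _
      rw [hr l]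
      simp only [hQ_def]
      ring
    have hEcorr : ∑ i, E i * corr i = corr j := by simp [hE_def, ite_mul]
    have hXeq : (∑ l, P l * r l) = (∑ i ∈ S, u i * corr i) - γ * |corr j| := by
      have e0 : (∑ l, P l * r l) = ∑ i, h' i * corr i := by
        simp only [hP_def]
        exact dot_mulVec A h' r
      have e : (∑ i, h' i * corr i) = (∑ i, u i * corr i) - (γ*s) * ∑ i, E i * corr i := by
        rw [Finset.mul_sum, ← Finset.sum_sub_distrib]
        apply Finset.sum_congr rfl; intro i _
        simp only [hh_def]; ring
      rw [e0, e, hEcorr, hIA, mul_assoc, hsc]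
    have hup : (∑ l, P l * r l) ≤ 0 := by
      rw [hXeq]
      linarith [hsum_le]
    have hdown : 0 < (∑ l, P l * r l) := by
      rw [hPr]
      have c1 : δ*(a*G) ≤ δ*(a*(sq1*a)) :=
        mul_le_mul_of_nonneg_left (mul_le_mul_of_nonneg_left hGle (le_of_lt ha0)) hδ0
      have c2 : Real.sqrt (1+δ) * G * ε ≤ Real.sqrt (1+δ) * (sq1*a) * ε :=
        mul_le_mul_of_nonneg_right
          (mul_le_mul_of_nonneg_left hGle (Real.sqrt_nonneg _)) hε
      have c4 : a*(sq1*Real.sqrt (1+δ)*ε) < a*((1-sq1*δ)*Real.sqrt Nc) :=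
        mul_lt_mul_of_pos_left hbig ha0
      have c5 : a*((1-sq1*δ)*Real.sqrt Nc) ≤ a*((1-sq1*δ)*a) :=
        mul_le_mul_of_nonneg_left
          (mul_le_mul_of_nonneg_left hsNca (le_of_lt h1δ)) (le_of_lt ha0)
      linarith [hPQ, hPv, c1, c2, c4, c5, ha2]
    linarith

set_option maxHeartbeats 1600000 in
/-- Support recovery under noise: if `δ_{k+b+1} < 1/√(k−g+1)` and
`min_{i∈T\T₀}|x_i| > max{√(2(1+δ))ε/(1−√(k−g+1)δ), 2ε/√(1−δ)}`, then OMP with prior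
support `T₀` and stopping rule `‖rᵗ‖₂ ≤ ε` selects exactly the indices of `T\T₀` in
exactly `k−g` iterations: all selected indices lie in `T\T₀`, `‖rᵗ‖₂ > ε` for
`t < k−g` and `‖r^{k−g}‖₂ ≤ ε`. -/
theorem stmt11 (m n k g b : ℕ) (hg : g < k)
    (A : Matrix (Fin m) (Fin n) ℝ) (δ ε : ℝ) (hRIP : RIP A (k + b + 1) δ)
    (hδ : δ < 1 / Real.sqrt ((k : ℝ) - g + 1))
    (x : Fin n → ℝ) (v : Fin m → ℝ) (hv : Real.sqrt (∑ i, v i ^ 2) ≤ ε)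
    (T T₀ : Finset (Fin n))
    (hT : ∀ i, x i ≠ 0 ↔ i ∈ T) (hTcard : T.card = k)
    (hcap : (T ∩ T₀).card = g) (hbcard : (T₀ \ T).card = b)
    (hmin : ∀ i ∈ T \ T₀,
      max (Real.sqrt (2 * (1 + δ)) * ε / (1 - Real.sqrt ((k : ℝ) - g + 1) * δ))
        (2 * ε / Real.sqrt (1 - δ)) < |x i|)
    (y : Fin m → ℝ) (hy : y = A.mulVec x + v)
    (Λ : ℕ → Finset (Fin n)) (r : ℕ → Fin m → ℝ) (j : ℕ → Fin n)
    (xe : ℕ → Fin n → ℝ)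
    (hΛ0 : Λ 0 = T₀)
    (hxe : ∀ t, (∀ i, i ∉ Λ t → xe t i = 0) ∧ r t = y - A.mulVec (xe t) ∧
      (∀ i ∈ Λ t, (∑ l, A l i * r t l) = 0))
    (hj : ∀ t, 1 ≤ t → ∀ i, |∑ l, A l i * r (t - 1) l| ≤ |∑ l, A l (j t) * r (t - 1) l|)
    (hΛ : ∀ t, 1 ≤ t → Λ t = Λ (t - 1) ∪ {j t}) :
    (∀ t, 1 ≤ t → t ≤ k - g → j t ∈ T \ T₀) ∧
    (∀ t, t < k - g → ε < Real.sqrt (∑ i, r t i ^ 2)) ∧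
    Real.sqrt (∑ i, r (k - g) i ^ 2) ≤ ε := by
  have hε0 : 0 ≤ ε := le_trans (Real.sqrt_nonneg _) hv
  have hgkR : (g : ℝ) < (k : ℝ) := by exact_mod_cast hg
  have hsΔpos : 0 < Real.sqrt ((k : ℝ) - g + 1) := Real.sqrt_pos.mpr (by linarith)
  have hδd : Real.sqrt ((k : ℝ) - g + 1) * δ < 1 := by
    have := (lt_div_iff₀ hsΔpos).mp hδ
    linarith
  -- δ ≥ 0 from RIP applied to a singleton
  have hδ0 : 0 ≤ δ := by
    have hTne : T.Nonempty := Finset.card_pos.mp (by omega)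
    obtain ⟨i₀, hi₀⟩ := hTne
    have hrip := hRIP (fun i => if i = i₀ then (1:ℝ) else 0)
      ⟨{i₀}, by simp only [Finset.card_singleton]; omega, fun i hi => by
        simp only [Finset.mem_singleton] at hi; simp [hi]⟩
    have hN1 : (∑ i, (if i = i₀ then (1:ℝ) else 0) ^ 2) = 1 := by
      simp [apply_ite (fun z : ℝ => z ^ 2)]
    rw [hN1] at hrip
    linarith [hrip.1, hrip.2]
  have hsΔ1 : 1 ≤ Real.sqrt ((k : ℝ) - g + 1) := by
    have := Real.sqrt_le_sqrt (show (1:ℝ) ≤ (k : ℝ) - g + 1 by linarith)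
    simpa using this
  have hδ1 : δ < 1 := by nlinarith
  have h1δpos : 0 < 1 - Real.sqrt ((k : ℝ) - g + 1) * δ := by linarith
  have hsd1 : 0 < Real.sqrt (1 - δ) := Real.sqrt_pos.mpr (by linarith)
  -- residual formula
  have hres : ∀ t l, r t l = (A.mulVec (fun i => x i - xe t i)) l + v l := by
    intro t l
    have h1 : r t l = y l - (A.mulVec (xe t)) l := by rw [(hxe t).2.1]; rfl
    have h2 : y l = (A.mulVec x) l + v l := by rw [hy]; rfl
    have h3 : (A.mulVec (fun i => x i - xe t i)) l = (A.mulVec x) l - (A.mulVec (xe t)) l := by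
      simp only [Matrix.mulVec, dotProduct, ← Finset.sum_sub_distrib]
      apply Finset.sum_congr rfl; intro i _; ring
    rw [h1, h2, h3]; ring
  -- cardinality of T ∪ T₀
  have hΩcard : (T ∪ T₀).card = k + b := by
    rw [← Finset.union_sdiff_self_eq_union,
      Finset.card_union_of_disjoint Finset.disjoint_sdiff, hTcard, hbcard]
  -- helper: the card of the remaining support
  have hScard : ∀ t, T₀ ⊆ Λ t → Λ t \ T₀ ⊆ T \ T₀ → (Λ t \ T₀).card = t →
      (T \ Λ t).card + (g + t) = k := by
    intro t h1 h2 h3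
    have hTcapΛ : T ∩ Λ t = (T ∩ T₀) ∪ (Λ t \ T₀) := by
      ext i
      simp only [Finset.mem_inter, Finset.mem_union, Finset.mem_sdiff]
      constructor
      · rintro ⟨hiT, hiΛ⟩
        by_cases h0 : i ∈ T₀
        · exact Or.inl ⟨hiT, h0⟩
        · exact Or.inr ⟨hiΛ, h0⟩
      · rintro (⟨hiT, h0⟩ | h4)
        · exact ⟨hiT, h1 h0⟩
        · have h5 := h2 (Finset.mem_sdiff.mpr h4)
          exact ⟨(Finset.mem_sdiff.mp h5).1, h4.1⟩
    have hdisj : Disjoint (T ∩ T₀) (Λ t \ T₀) := by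
      apply Finset.disjoint_left.mpr
      intro i hi1 hi2
      exact (Finset.mem_sdiff.mp hi2).2 (Finset.mem_inter.mp hi1).2
    have hcardcap : (T ∩ Λ t).card = g + t := by
      rw [hTcapΛ, Finset.card_union_of_disjoint hdisj, hcap, h3]
    have := Finset.card_sdiff_add_card_inter T (Λ t)
    rw [hcardcap, hTcard] at this
    omega
  -- supports inside T ∪ T₀
  have hΛsub : ∀ t, T₀ ⊆ Λ t → Λ t \ T₀ ⊆ T \ T₀ → Λ t ⊆ T ∪ T₀ := by
    intro t h1 h2 i hi
    by_cases h0 : i ∈ T₀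
    · exact Finset.mem_union_right _ h0
    · have := h2 (Finset.mem_sdiff.mpr ⟨hi, h0⟩)
      exact Finset.mem_union_left _ (Finset.mem_sdiff.mp this).1
  have husupp : ∀ t, Λ t ⊆ T ∪ T₀ → ∀ i, i ∉ T ∪ T₀ → x i - xe t i = 0 := by
    intro t hsub i hi
    have hiT : i ∉ T := fun h => hi (Finset.mem_union_left _ h)
    have hx0 : x i = 0 := by
      by_contra h
      exact hiT ((hT i).mp h)
    have hxe0 : xe t i = 0 := (hxe t).1 i (fun h => hi (hsub h))
    rw [hx0, hxe0, sub_zero]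
  -- the big inequality at each active step
  have hbigstep : ∀ t, t < k - g → T₀ ⊆ Λ t → Λ t \ T₀ ⊆ T \ T₀ → (Λ t \ T₀).card = t →
      Real.sqrt (((T \ Λ t).card : ℝ) + 1) * Real.sqrt (1 + δ) * ε
        < (1 - Real.sqrt (((T \ Λ t).card : ℝ) + 1) * δ) *
          Real.sqrt (∑ i ∈ T \ Λ t, (x i - xe t i) ^ 2) := by
    intro t ht h1 h2 h3
    set S := T \ Λ t with hS_def
    have hq := hScard t h1 h2 h3
    rw [← hS_def] at hq
    have hq1 : 1 ≤ S.card := by omega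
    have hqkg : S.card ≤ k - g := by omega
    have hSsub : S ⊆ T \ T₀ := Finset.sdiff_subset_sdiff (le_refl T) h1
    obtain ⟨i₀, hi₀S, hi₀min⟩ := S.exists_min_image (fun i => |x i|)
      (Finset.card_pos.mp (by omega))
    have hxe0 : ∀ i ∈ S, xe t i = 0 := fun i hi =>
      (hxe t).1 i (Finset.mem_sdiff.mp hi).2
    have hminS := hmin i₀ (hSsub hi₀S)
    have hθx : Real.sqrt (2 * (1 + δ)) * ε / (1 - Real.sqrt ((k : ℝ) - g + 1) * δ) < |x i₀| :=
      lt_of_le_of_lt (le_max_left _ _) hminS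
    -- sum lower bound
    have hsum_ge : (S.card : ℝ) * |x i₀| ^ 2 ≤ ∑ i ∈ S, (x i - xe t i) ^ 2 := by
      have h5 := Finset.card_nsmul_le_sum S (fun i => (x i - xe t i) ^ 2) (|x i₀| ^ 2)
        (fun i hi => by
          show |x i₀| ^ 2 ≤ (x i - xe t i) ^ 2
          rw [hxe0 i hi, sub_zero, ← sq_abs (x i)]
          have := hi₀min i hi
          nlinarith [abs_nonneg (x i₀), abs_nonneg (x i)])
      simpa [nsmul_eq_mul] using h5
    have hsqrt_ge : Real.sqrt (S.card : ℝ) * |x i₀| ≤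
        Real.sqrt (∑ i ∈ S, (x i - xe t i) ^ 2) := by
      have h5 := Real.sqrt_le_sqrt hsum_ge
      rwa [Real.sqrt_mul (Nat.cast_nonneg _), Real.sqrt_sq (abs_nonneg _)] at h5
    -- comparison of square roots
    have hcast : ((S.card : ℝ) + 1) ≤ (k : ℝ) - g + 1 := by
      have : (S.card : ℝ) ≤ ((k - g : ℕ) : ℝ) := by exact_mod_cast hqkg
      have h6 : ((k - g : ℕ) : ℝ) = (k : ℝ) - g := by
        push_cast [Nat.cast_sub (le_of_lt hg)]; ring
      linarith
    have hsqle : Real.sqrt ((S.card : ℝ) + 1) ≤ Real.sqrt ((k : ℝ) - g + 1) :=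
      Real.sqrt_le_sqrt hcast
    have hsq2 : Real.sqrt ((S.card : ℝ) + 1) ≤ Real.sqrt 2 * Real.sqrt (S.card : ℝ) := by
      rw [← Real.sqrt_mul (by norm_num : (0:ℝ) ≤ 2)]
      apply Real.sqrt_le_sqrt
      have : (1:ℝ) ≤ (S.card : ℝ) := by exact_mod_cast hq1
      linarith
    have hsqcpos : 0 < Real.sqrt (S.card : ℝ) :=
      Real.sqrt_pos.mpr (by exact_mod_cast (by omega : 0 < S.card))
    have hfact : Real.sqrt (2 * (1 + δ)) * ε
        = (1 - Real.sqrt ((k : ℝ) - g + 1) * δ) *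
          (Real.sqrt (2 * (1 + δ)) * ε / (1 - Real.sqrt ((k : ℝ) - g + 1) * δ)) := by
      rw [mul_div_assoc', eq_div_iff (ne_of_gt h1δpos)]; ring
    have hsplitsqrt : Real.sqrt (2 * (1 + δ)) = Real.sqrt 2 * Real.sqrt (1 + δ) :=
      Real.sqrt_mul (by norm_num) _
    -- chain
    have step1 : Real.sqrt ((S.card : ℝ) + 1) * Real.sqrt (1 + δ) * ε
        ≤ Real.sqrt (S.card : ℝ) * (Real.sqrt (2 * (1 + δ)) * ε) := by
      have hnn : 0 ≤ Real.sqrt (1 + δ) * ε := mul_nonneg (Real.sqrt_nonneg _) hε0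
      have := mul_le_mul_of_nonneg_right hsq2 hnn
      calc Real.sqrt ((S.card : ℝ) + 1) * Real.sqrt (1 + δ) * ε
          = Real.sqrt ((S.card : ℝ) + 1) * (Real.sqrt (1 + δ) * ε) := by ring
        _ ≤ Real.sqrt 2 * Real.sqrt (S.card : ℝ) * (Real.sqrt (1 + δ) * ε) := this
        _ = Real.sqrt (S.card : ℝ) * (Real.sqrt (2 * (1 + δ)) * ε) := by
            rw [hsplitsqrt]; ring
    have step2 : Real.sqrt (S.card : ℝ) * (Real.sqrt (2 * (1 + δ)) * ε)
        < Real.sqrt (S.card : ℝ) * ((1 - Real.sqrt ((k : ℝ) - g + 1) * δ) * |x i₀|) := by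
      apply mul_lt_mul_of_pos_left _ hsqcpos
      calc Real.sqrt (2 * (1 + δ)) * ε
          = (1 - Real.sqrt ((k : ℝ) - g + 1) * δ) *
            (Real.sqrt (2 * (1 + δ)) * ε / (1 - Real.sqrt ((k : ℝ) - g + 1) * δ)) := hfact
        _ < (1 - Real.sqrt ((k : ℝ) - g + 1) * δ) * |x i₀| :=
            mul_lt_mul_of_pos_left hθx h1δpos
    have step3 : Real.sqrt (S.card : ℝ) * ((1 - Real.sqrt ((k : ℝ) - g + 1) * δ) * |x i₀|)
        ≤ (1 - Real.sqrt (((S.card : ℝ)) + 1) * δ) *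
          Real.sqrt (∑ i ∈ S, (x i - xe t i) ^ 2) := by
      have e1 : Real.sqrt (S.card : ℝ) * ((1 - Real.sqrt ((k : ℝ) - g + 1) * δ) * |x i₀|)
          = (1 - Real.sqrt ((k : ℝ) - g + 1) * δ) * (Real.sqrt (S.card : ℝ) * |x i₀|) := by
        ring
      rw [e1]
      have e2 : (1 - Real.sqrt ((k : ℝ) - g + 1) * δ) * (Real.sqrt (S.card : ℝ) * |x i₀|)
          ≤ (1 - Real.sqrt ((k : ℝ) - g + 1) * δ) * Real.sqrt (∑ i ∈ S, (x i - xe t i) ^ 2) :=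
        mul_le_mul_of_nonneg_left hsqrt_ge (le_of_lt h1δpos)
      have e3 : (1 - Real.sqrt ((k : ℝ) - g + 1) * δ) ≤ 1 - Real.sqrt ((S.card : ℝ) + 1) * δ := by
        nlinarith
      have e4 : (1 - Real.sqrt ((k : ℝ) - g + 1) * δ) * Real.sqrt (∑ i ∈ S, (x i - xe t i) ^ 2)
          ≤ (1 - Real.sqrt ((S.card : ℝ) + 1) * δ) * Real.sqrt (∑ i ∈ S, (x i - xe t i) ^ 2) :=
        mul_le_mul_of_nonneg_right e3 (Real.sqrt_nonneg _)
      linarith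
    linarith
  -- the invariant, by induction
  have INV : ∀ t, t ≤ k - g →
      (T₀ ⊆ Λ t ∧ Λ t \ T₀ ⊆ T \ T₀ ∧ (Λ t \ T₀).card = t) ∧
      (1 ≤ t → j t ∈ T \ T₀) := by
    intro t
    induction t with
    | zero =>
      intro _
      refine ⟨⟨?_, ?_, ?_⟩, fun h => absurd h (by norm_num)⟩
      · rw [hΛ0]
      · rw [hΛ0]; simp
      · rw [hΛ0]; simp
    | succ t ih =>
      intro ht1
      have htk : t ≤ k - g := by omega
      have htlt : t < k - g := by omega
      obtain ⟨⟨h1, h2, h3⟩, _⟩ := ih htk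
      have hΛTT := hΛsub t h1 h2
      have hmax' : ∀ i, |∑ l, A l i * r t l| ≤ |∑ l, A l (j (t+1)) * r t l| := by
        have h5 := hj (t+1) (by omega)
        simpa using h5
      have hcorr' : ∀ i ∈ (T ∪ T₀) \ (T \ Λ t), (∑ l, A l i * r t l) = 0 := by
        intro i hi
        obtain ⟨hiU, hiS⟩ := Finset.mem_sdiff.mp hi
        have hiΛ : i ∈ Λ t := by
          rcases Finset.mem_union.mp hiU with h | h
          · by_contra hc
            exact hiS (Finset.mem_sdiff.mpr ⟨h, hc⟩)
          · exact h1 h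
        exact (hxe t).2.2 i hiΛ
      have hjS : j (t+1) ∈ T \ Λ t :=
        key_s11 hRIP hδ0 hε0 (fun i => x i - xe t i) v (r t) (T ∪ T₀) (T \ Λ t)
          (by omega) (fun i hi => Finset.mem_union_left _ (Finset.mem_sdiff.mp hi).1)
          (husupp t hΛTT) (hres t) hv hcorr' (hbigstep t htlt h1 h2 h3) (j (t+1)) hmax'
      have hjTT : j (t+1) ∈ T \ T₀ := Finset.sdiff_subset_sdiff (le_refl T) h1 hjS
      have hjnΛ : j (t+1) ∉ Λ t := (Finset.mem_sdiff.mp hjS).2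
      have hΛs : Λ (t+1) = Λ t ∪ {j (t+1)} := by
        have h5 := hΛ (t+1) (by omega)
        simpa using h5
      refine ⟨⟨?_, ?_, ?_⟩, fun _ => hjTT⟩
      · rw [hΛs]; exact h1.trans Finset.subset_union_left
      · rw [hΛs]
        intro i hi
        obtain ⟨hiU, hiT₀⟩ := Finset.mem_sdiff.mp hi
        rcases Finset.mem_union.mp hiU with h | h
        · exact h2 (Finset.mem_sdiff.mpr ⟨h, hiT₀⟩)
        · rw [Finset.mem_singleton] at h
          rw [h]
          exact hjTT
      · rw [hΛs]
        have e : (Λ t ∪ {j (t+1)}) \ T₀ = (Λ t \ T₀) ∪ {j (t+1)} := by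
          ext i
          simp only [Finset.mem_sdiff, Finset.mem_union, Finset.mem_singleton]
          constructor
          · rintro ⟨h5 | h5, h6⟩
            · exact Or.inl ⟨h5, h6⟩
            · exact Or.inr h5
          · rintro (⟨h5, h6⟩ | h5)
            · exact ⟨Or.inl h5, h6⟩
            · refine ⟨Or.inr h5, ?_⟩
              rw [h5]
              exact (Finset.mem_sdiff.mp hjTT).2
        have hdisj : Disjoint (Λ t \ T₀) ({j (t+1)} : Finset (Fin n)) :=
          Finset.disjoint_singleton_right.mpr
            (fun hc => hjnΛ (Finset.mem_sdiff.mp hc).1)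
        rw [e, Finset.card_union_of_disjoint hdisj, Finset.card_singleton, h3]
  refine ⟨fun t ht1 ht2 => (INV t ht2).2 ht1, ?_, ?_⟩
  · -- the residual stays large before step k-g
    intro t ht
    obtain ⟨⟨h1, h2, h3⟩, _⟩ := INV t (le_of_lt ht)
    have hq := hScard t h1 h2 h3
    obtain ⟨i₀, hi₀⟩ := Finset.card_pos.mp (show 0 < (T \ Λ t).card by omega)
    have hΛTT := hΛsub t h1 h2
    have hxe0 : xe t i₀ = 0 := (hxe t).1 i₀ (Finset.mem_sdiff.mp hi₀).2
    have hminS := hmin i₀ (Finset.sdiff_subset_sdiff (le_refl T) h1 hi₀)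
    have h2ε : 2 * ε / Real.sqrt (1 - δ) < |x i₀| := lt_of_le_of_lt (le_max_right _ _) hminS
    have hrip := hRIP (fun i => x i - xe t i) ⟨T ∪ T₀, by omega, husupp t hΛTT⟩
    have hNu0 : (0:ℝ) ≤ ∑ i, (x i - xe t i) ^ 2 := Finset.sum_nonneg fun _ _ => sq_nonneg _
    have hNAu0 : (0:ℝ) ≤ ∑ l, (A.mulVec (fun i => x i - xe t i)) l ^ 2 :=
      Finset.sum_nonneg fun _ _ => sq_nonneg _
    have hNv0 : (0:ℝ) ≤ ∑ l, v l ^ 2 := Finset.sum_nonneg fun _ _ => sq_nonneg _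
    -- |x i₀| ≤ √Nu
    have hterm : |x i₀| ^ 2 ≤ ∑ i, (x i - xe t i) ^ 2 := by
      have h5 : (x i₀ - xe t i₀) ^ 2 ≤ ∑ i, (x i - xe t i) ^ 2 :=
        Finset.single_le_sum (f := fun i => (x i - xe t i) ^ 2)
          (fun i _ => sq_nonneg _) (Finset.mem_univ i₀)
      rw [hxe0, sub_zero] at h5
      rw [sq_abs]
      exact h5
    have habs : |x i₀| ≤ Real.sqrt (∑ i, (x i - xe t i) ^ 2) := by
      have := Real.sqrt_le_sqrt hterm
      rwa [Real.sqrt_sq (abs_nonneg _)] at this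
    have hsNAu : Real.sqrt (1-δ) * Real.sqrt (∑ i, (x i - xe t i) ^ 2)
        ≤ Real.sqrt (∑ l, (A.mulVec (fun i => x i - xe t i)) l ^ 2) := by
      have h5 := Real.sqrt_le_sqrt hrip.1
      rwa [Real.sqrt_mul (by linarith : (0:ℝ) ≤ 1 - δ)] at h5
    have h9 : 2 * ε < Real.sqrt (1-δ) * |x i₀| := by
      have h6 := mul_lt_mul_of_pos_right h2ε hsd1
      rw [div_mul_cancel₀ _ (ne_of_gt hsd1)] at h6
      linarith
    have h10 : 2 * ε < Real.sqrt (∑ l, (A.mulVec (fun i => x i - xe t i)) l ^ 2) := by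
      have h7 : Real.sqrt (1-δ) * |x i₀| ≤
          Real.sqrt (1-δ) * Real.sqrt (∑ i, (x i - xe t i) ^ 2) :=
        mul_le_mul_of_nonneg_left habs (le_of_lt hsd1)
      linarith
    -- triangle inequality
    have hNr : (∑ i, r t i ^ 2) = (∑ l, (A.mulVec (fun i => x i - xe t i)) l ^ 2)
        + 2 * (∑ l, (A.mulVec (fun i => x i - xe t i)) l * v l) + ∑ l, v l ^ 2 := by
      calc (∑ i, r t i ^ 2)
          = ∑ l, ((A.mulVec (fun i => x i - xe t i)) l + v l) ^ 2 :=
            Finset.sum_congr rfl fun l _ => by rw [hres t l]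
        _ = ∑ l, ((A.mulVec (fun i => x i - xe t i)) l ^ 2
            + 2 * ((A.mulVec (fun i => x i - xe t i)) l * v l) + v l ^ 2) :=
            Finset.sum_congr rfl fun l _ => by ring
        _ = _ := by
            rw [Finset.sum_add_distrib, Finset.sum_add_distrib, ← Finset.mul_sum]
    have hdotlow : -(Real.sqrt (∑ l, (A.mulVec (fun i => x i - xe t i)) l ^ 2)
          * Real.sqrt (∑ l, v l ^ 2))
        ≤ ∑ l, (A.mulVec (fun i => x i - xe t i)) l * v l := by
      have h5 := abs_dot_le (A.mulVec (fun i => x i - xe t i)) v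
      have h6 := neg_abs_le (∑ l, (A.mulVec (fun i => x i - xe t i)) l * v l)
      linarith
    have hsq : (Real.sqrt (∑ l, (A.mulVec (fun i => x i - xe t i)) l ^ 2)
        - Real.sqrt (∑ l, v l ^ 2)) ^ 2 ≤ ∑ i, r t i ^ 2 := by
      have e1 := Real.sq_sqrt hNAu0
      have e2 := Real.sq_sqrt hNv0
      nlinarith [hdotlow]
    have h11 : Real.sqrt (∑ l, (A.mulVec (fun i => x i - xe t i)) l ^ 2)
        - Real.sqrt (∑ l, v l ^ 2) ≤ Real.sqrt (∑ i, r t i ^ 2) := by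
      have h5 := Real.sqrt_le_sqrt hsq
      rw [Real.sqrt_sq_eq_abs] at h5
      calc Real.sqrt (∑ l, (A.mulVec (fun i => x i - xe t i)) l ^ 2)
            - Real.sqrt (∑ l, v l ^ 2)
          ≤ |Real.sqrt (∑ l, (A.mulVec (fun i => x i - xe t i)) l ^ 2)
            - Real.sqrt (∑ l, v l ^ 2)| := le_abs_self _
        _ ≤ _ := h5
    linarith [hv]
  · -- after k - g steps the residual is small
    obtain ⟨⟨h1, h2, h3⟩, _⟩ := INV (k-g) (le_refl _)
    have hTTcard : (T \ T₀).card = k - g := by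
      have := Finset.card_sdiff_add_card_inter T T₀
      omega
    have heq : Λ (k-g) \ T₀ = T \ T₀ := Finset.eq_of_subset_of_card_le h2 (by omega)
    have hTΛ : T ⊆ Λ (k-g) := by
      intro i hi
      by_cases h0 : i ∈ T₀
      · exact h1 h0
      · have h5 : i ∈ T \ T₀ := Finset.mem_sdiff.mpr ⟨hi, h0⟩
        rw [← heq] at h5
        exact (Finset.mem_sdiff.mp h5).1
    have husup : ∀ i, i ∉ Λ (k-g) → x i - xe (k-g) i = 0 := by
      intro i hiΛ
      have hx0 : x i = 0 := by
        by_contra h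
        exact hiΛ (hTΛ ((hT i).mp h))
      rw [hx0, (hxe (k-g)).1 i hiΛ, sub_zero]
    have hdot0 : (∑ l, (A.mulVec (fun i => x i - xe (k-g) i)) l * r (k-g) l) = 0 := by
      rw [dot_mulVec]
      apply Finset.sum_eq_zero
      intro i _
      show (x i - xe (k-g) i) * (∑ l, A l i * r (k-g) l) = 0
      by_cases hiΛ : i ∈ Λ (k-g)
      · rw [(hxe (k-g)).2.2 i hiΛ, mul_zero]
      · rw [husup i hiΛ, zero_mul]
    have hv_pt : ∀ l, v l = r (k-g) l - (A.mulVec (fun i => x i - xe (k-g) i)) l := by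
      intro l
      have := hres (k-g) l
      linarith
    have hNv_eq : (∑ l, v l ^ 2) = (∑ l, r (k-g) l ^ 2)
        - 2 * (∑ l, (A.mulVec (fun i => x i - xe (k-g) i)) l * r (k-g) l)
        + ∑ l, (A.mulVec (fun i => x i - xe (k-g) i)) l ^ 2 := by
      calc (∑ l, v l ^ 2)
          = ∑ l, (r (k-g) l - (A.mulVec (fun i => x i - xe (k-g) i)) l) ^ 2 :=
            Finset.sum_congr rfl fun l _ => by rw [hv_pt l]
        _ = ∑ l, (r (k-g) l ^ 2
            - 2 * ((A.mulVec (fun i => x i - xe (k-g) i)) l * r (k-g) l)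
            + (A.mulVec (fun i => x i - xe (k-g) i)) l ^ 2) :=
            Finset.sum_congr rfl fun l _ => by ring
        _ = _ := by
            rw [Finset.sum_add_distrib, Finset.sum_sub_distrib, ← Finset.mul_sum]
    have hle : (∑ i, r (k-g) i ^ 2) ≤ ∑ l, v l ^ 2 := by
      have h5 : (0:ℝ) ≤ ∑ l, (A.mulVec (fun i => x i - xe (k-g) i)) l ^ 2 :=
        Finset.sum_nonneg fun _ _ => sq_nonneg _
      rw [hNv_eq, hdot0]
      linarith
    exact le_trans (Real.sqrt_le_sqrt hle) hv
end

section
/- Under the conditions of the noisy support recovery theorem, with the additional assumption min_{i ∈ T} |x_i| > max{ √(2(1+δ)) ε/(1 − √(k−g+1) δ), 2ε/√(1−δ) } (δ = δ_{k+b+1}), the output x̂ of OMP_{T₀} satisfies min_{i ∈ T∩T₀} |x̂_i| > ε/√(1−δ), max_{i ∈ T₀\T} |x̂_i| ≤ ε/√(1−δ), and ‖x − x̂‖₂ ≤ ε/√(1−δ). -/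
open scoped BigOperators

/-- Under the conditions of the noisy support recovery theorem, with
`min_{i∈T}|x_i| > max{√(2(1+δ))ε/(1−√(k−g+1)δ), 2ε/√(1−δ)}`, the least-squares
output `x̂` of OMP on `Λ_{k−g} = T∪T₀` satisfies
`min_{i∈T∩T₀}|x̂_i| > ε/√(1−δ)`, `max_{i∈T₀\T}|x̂_i| ≤ ε/√(1−δ)` and
`‖x − x̂‖₂ ≤ ε/√(1−δ)`. -/
theorem stmt12 (m n k g b : ℕ) (hg : g < k)
    (A : Matrix (Fin m) (Fin n) ℝ) (δ ε : ℝ) (hRIP : RIP A (k + b + 1) δ)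
    (hδ : δ < 1 / Real.sqrt ((k : ℝ) - g + 1))
    (x : Fin n → ℝ) (v : Fin m → ℝ) (hv : Real.sqrt (∑ i, v i ^ 2) ≤ ε)
    (T T₀ : Finset (Fin n))
    (hT : ∀ i, x i ≠ 0 ↔ i ∈ T) (hTcard : T.card = k)
    (hcap : (T ∩ T₀).card = g) (hbcard : (T₀ \ T).card = b)
    (hmin : ∀ i ∈ T,
      max (Real.sqrt (2 * (1 + δ)) * ε / (1 - Real.sqrt ((k : ℝ) - g + 1) * δ))
        (2 * ε / Real.sqrt (1 - δ)) < |x i|)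
    (y : Fin m → ℝ) (hy : y = A.mulVec x + v)
    (xh : Fin n → ℝ) (hsupp : ∀ i ∉ T ∪ T₀, xh i = 0)
    (horth : ∀ i ∈ T ∪ T₀, (∑ l, A l i * (y - A.mulVec xh) l) = 0) :
    (∀ i ∈ T ∩ T₀, ε / Real.sqrt (1 - δ) < |xh i|) ∧
    (∀ i ∈ T₀ \ T, |xh i| ≤ ε / Real.sqrt (1 - δ)) ∧
    Real.sqrt (∑ i, (x i - xh i) ^ 2) ≤ ε / Real.sqrt (1 - δ) := by
  -- ε is nonnegative
  have hε : 0 ≤ ε := le_trans (Real.sqrt_nonneg _) hv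
  -- 1 - δ is positive
  have hkg : (2 : ℝ) ≤ (k : ℝ) - g + 1 := by
    have : (g : ℝ) + 1 ≤ (k : ℝ) := by exact_mod_cast hg
    linarith
  have hsq1 : (1 : ℝ) < Real.sqrt ((k : ℝ) - g + 1) := by
    have := Real.lt_sqrt (x := 1) (y := (k : ℝ) - g + 1) (by norm_num)
    rw [this]; linarith
  have h1δ : 0 < 1 - δ := by
    have h1 : 1 / Real.sqrt ((k : ℝ) - g + 1) < 1 := by
      rw [div_lt_one (by linarith)]; exact hsq1
    linarith
  have hsδ : 0 < Real.sqrt (1 - δ) := Real.sqrt_pos.2 h1δ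
  -- the error vector
  set u : Fin n → ℝ := fun i => x i - xh i with hu
  have husupp : ∀ i ∉ T ∪ T₀, u i = 0 := by
    intro i hi
    have hx0 : x i = 0 := by
      by_contra hxi
      exact hi (Finset.mem_union_left _ ((hT i).1 hxi))
    simp [hu, hx0, hsupp i hi]
  -- cardinality of the union
  have hcard : (T ∪ T₀).card ≤ k + b + 1 := by
    have : T ∪ T₀ = T ∪ (T₀ \ T) := by
      rw [Finset.union_sdiff_self_eq_union]
    rw [this, Finset.card_union_of_disjoint Finset.disjoint_sdiff, hTcard, hbcard]
    omega
  -- RIP lower bound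
  have hRIPu := (hRIP u ⟨T ∪ T₀, hcard, husupp⟩).1
  -- pointwise formula for A u
  have hAu : ∀ l, (A.mulVec u) l = (y - A.mulVec xh) l - v l := by
    intro l
    simp only [Matrix.mulVec, dotProduct, hu, hy, Pi.sub_apply, Pi.add_apply,
      mul_sub, Finset.sum_sub_distrib]
    ring
  -- orthogonality: ⟨Au, y - A x̂⟩ = 0
  have hswap : ∑ l, (A.mulVec u) l * (y - A.mulVec xh) l = 0 := by
    have : ∑ l, (A.mulVec u) l * (y - A.mulVec xh) l
        = ∑ i, u i * (∑ l, A l i * (y - A.mulVec xh) l) := by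
      simp only [Matrix.mulVec, dotProduct, Finset.sum_mul, Finset.mul_sum]
      rw [Finset.sum_comm]
      refine Finset.sum_congr rfl fun i _ => Finset.sum_congr rfl fun l _ => by ring
    rw [this]
    refine Finset.sum_eq_zero fun i _ => ?_
    by_cases hi : i ∈ T ∪ T₀
    · rw [horth i hi, mul_zero]
    · rw [husupp i hi, zero_mul]
  -- energy of A u
  set P : ℝ := ∑ l, (A.mulVec u) l ^ 2 with hP
  have hPnn : 0 ≤ P := Finset.sum_nonneg fun l _ => sq_nonneg _
  have hPeq : P = ∑ l, (A.mulVec u) l * (-v l) := by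
    have : P = ∑ l, (A.mulVec u) l * ((y - A.mulVec xh) l - v l) := by
      rw [hP]
      refine Finset.sum_congr rfl fun l _ => ?_
      rw [← hAu l]; ring
    rw [this]
    simp only [mul_sub, Finset.sum_sub_distrib, hswap, zero_sub, mul_neg,
      Finset.sum_neg_distrib]
  -- Cauchy–Schwarz: P² ≤ P * ∑ v²
  have hCS : P ^ 2 ≤ P * (∑ l, v l ^ 2) := by
    have := Finset.sum_mul_sq_le_sq_mul_sq Finset.univ (fun l => (A.mulVec u) l)
      (fun l => -v l)
    calc P ^ 2 = (∑ l, (A.mulVec u) l * (-v l)) ^ 2 := by rw [← hPeq]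
      _ ≤ (∑ l, (A.mulVec u) l ^ 2) * ∑ l, (-v l) ^ 2 := this
      _ = P * (∑ l, v l ^ 2) := by rw [← hP]; simp
  -- ∑ v² ≤ ε²
  have hvsq : (∑ l, v l ^ 2) ≤ ε ^ 2 := by
    have h0 : 0 ≤ ∑ l, v l ^ 2 := Finset.sum_nonneg fun l _ => sq_nonneg _
    nlinarith [Real.sq_sqrt h0, Real.sqrt_nonneg (∑ l, v l ^ 2)]
  -- hence P ≤ ε²
  have hPle : P ≤ ε ^ 2 := by
    rcases eq_or_lt_of_le hPnn with h | h
    · nlinarith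
    · have : P ^ 2 ≤ P * ε ^ 2 := le_trans hCS (by nlinarith)
      nlinarith
  -- the ℓ² bound on u
  have hSnn : 0 ≤ ∑ i, u i ^ 2 := Finset.sum_nonneg fun i _ => sq_nonneg _
  have hSle : (∑ i, u i ^ 2) ≤ ε ^ 2 / (1 - δ) := by
    rw [le_div_iff₀ h1δ]
    nlinarith [hRIPu]
  have hnorm : Real.sqrt (∑ i, u i ^ 2) ≤ ε / Real.sqrt (1 - δ) := by
    have h1 : Real.sqrt (∑ i, u i ^ 2) ≤ Real.sqrt (ε ^ 2 / (1 - δ)) :=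
      Real.sqrt_le_sqrt hSle
    have h2 : Real.sqrt (ε ^ 2 / (1 - δ)) = ε / Real.sqrt (1 - δ) := by
      rw [Real.sqrt_div (sq_nonneg ε), Real.sqrt_sq hε]
    rw [← h2]; exact h1
  -- pointwise bound |u i| ≤ ε/√(1-δ)
  have hpt : ∀ i, |u i| ≤ ε / Real.sqrt (1 - δ) := by
    intro i
    have h1 : u i ^ 2 ≤ ∑ j, u j ^ 2 :=
      Finset.single_le_sum (fun j _ => sq_nonneg (u j)) (Finset.mem_univ i)
    have h2 : |u i| = Real.sqrt (u i ^ 2) := (Real.sqrt_sq_eq_abs _).symm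
    rw [h2]
    exact le_trans (Real.sqrt_le_sqrt h1) hnorm
  refine ⟨?_, ?_, hnorm⟩
  · intro i hi
    have hiT : i ∈ T := Finset.mem_of_mem_inter_left hi
    have hmi := lt_of_le_of_lt (le_max_right _ _) (hmin i hiT)
    have := hpt i
    have habs : |x i| - |xh i| ≤ |u i| := by
      have := abs_sub_abs_le_abs_sub (x i) (xh i)
      simpa [hu] using this
    have h2ε : 2 * ε / Real.sqrt (1 - δ) = 2 * (ε / Real.sqrt (1 - δ)) := by ring
    rw [h2ε] at hmi
    linarith
  · intro i hi
    have hiT : i ∉ T := (Finset.mem_sdiff.1 hi).2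
    have hx0 : x i = 0 := by
      by_contra hxi; exact hiT ((hT i).1 hxi)
    have := hpt i
    rw [hu] at this
    simp only [hx0, zero_sub, abs_neg] at this
    exact this
end

section
/- In the necessary-condition construction, the correlations of the initial residual r⁰ = A_{T\T₀}x_{T\T₀} + v satisfy ⟨Ae_i, r⁰⟩ = (1 − δ/√(k−g+1))·θ for all i ∈ T\T₀, and ⟨Ae_{k+b+1}, r⁰⟩ = −((k−g)/√(k−g+1))·δ·θ − √(1−δ)·ε; consequently, when θ = √(1−δ)ε/(1 − √(k−g+1)δ), the maximum correlation over T\T₀ equals the correlation at the wrong index k+b+1 in absolute value. -/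
open scoped BigOperators

/-- Correlations for the necessary-condition construction: with `A = DU` as in the paper,
`x` equal to `θ` on `T\T₀ = {1,…,k−g}` and `1` on `T∩T₀`, noise
`v = D⁻¹U(0,…,0,−√(1−δ)ε)ᵀ` and initial residual `r⁰ = A_{T\T₀}x_{T\T₀} + v`, one has
`⟨Ae_i, r⁰⟩ = (1 − δ/√(k−g+1))θ` for `i ∈ T\T₀` and
`⟨Ae_{k+b+1}, r⁰⟩ = −((k−g)/√(k−g+1))δθ − √(1−δ)ε`; when
`θ = √(1−δ)ε/(1−√(k−g+1)δ)`, the two correlations agree in absolute value. -/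
theorem stmt16 (k g b K : ℕ) (hg : g < k) (hK : K = k - g)
    (δ ε θ η : ℝ) (hδ0 : 0 ≤ δ) (hδ : δ < 1 / Real.sqrt ((K : ℝ) + 1)) (hε : 0 < ε)
    (hη : η = (Real.sqrt ((K : ℝ) + 1) - 1) / Real.sqrt (K : ℝ))
    (ξ : ℕ → ℕ → ℝ)
    (hξortho : ∀ j1 j2, j1 < K - 1 → j2 < K - 1 →
      (∑ i ∈ Finset.range K, ξ j1 i * ξ j2 i) = if j1 = j2 then 1 else 0)
    (hξone : ∀ j, j < K - 1 → (∑ i ∈ Finset.range K, ξ j i) = 0)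
    (U : Matrix (Fin (k + b + 1)) (Fin (k + b + 1)) ℝ)
    (hU : ∀ i j : Fin (k + b + 1), U.transpose i j =
      if (j : ℕ) < K - 1 then (if (i : ℕ) < K then ξ (j : ℕ) (i : ℕ) else 0)
      else if (j : ℕ) = K - 1 then
        (if (i : ℕ) < K then 1 / Real.sqrt ((K : ℝ) * (η ^ 2 + 1))
         else if (i : ℕ) = k + b then η / Real.sqrt (η ^ 2 + 1) else 0)
      else if (j : ℕ) < k + b then (if (i : ℕ) = (j : ℕ) then 1 else 0)
      else
        (if (i : ℕ) < K then η / Real.sqrt ((K : ℝ) * (η ^ 2 + 1))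
         else if (i : ℕ) = k + b then -(1 / Real.sqrt (η ^ 2 + 1)) else 0))
    (hUortho : U.transpose * U = 1)
    (D : Matrix (Fin (k + b + 1)) (Fin (k + b + 1)) ℝ)
    (hD : D = Matrix.diagonal fun i : Fin (k + b + 1) =>
      if (i : ℕ) = K - 1 then Real.sqrt (1 - δ) else Real.sqrt (1 + δ))
    (A : Matrix (Fin (k + b + 1)) (Fin (k + b + 1)) ℝ) (hA : A = D * U)
    (x : Fin (k + b + 1) → ℝ)
    (hx : ∀ i, x i = if (i : ℕ) < K then θ else if (i : ℕ) < k then 1 else 0)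
    (v : Fin (k + b + 1) → ℝ)
    (hv : v = (D⁻¹ * U).mulVec fun i : Fin (k + b + 1) =>
      if (i : ℕ) = k + b then -(Real.sqrt (1 - δ) * ε) else 0)
    (r0 : Fin (k + b + 1) → ℝ)
    (hr0 : r0 = A.mulVec (fun i => if (i : ℕ) < K then θ else 0) + v) :
    (∀ i : Fin (k + b + 1), (i : ℕ) < K →
      (∑ l, A l i * r0 l) = (1 - δ / Real.sqrt ((K : ℝ) + 1)) * θ) ∧
    (∀ i : Fin (k + b + 1), (i : ℕ) = k + b →
      (∑ l, A l i * r0 l) =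
        -(((K : ℝ) / Real.sqrt ((K : ℝ) + 1)) * δ * θ) - Real.sqrt (1 - δ) * ε) ∧
    (θ = Real.sqrt (1 - δ) * ε / (1 - Real.sqrt ((K : ℝ) + 1) * δ) →
      ∀ i i' : Fin (k + b + 1), (i : ℕ) < K → (i' : ℕ) = k + b →
        |∑ l, A l i * r0 l| = |∑ l, A l i' * r0 l|) := by
  have hK1 : 1 ≤ K := by omega
  have hKk : K ≤ k := by omega
  have hKpos : (0:ℝ) < (K:ℝ) := by exact_mod_cast Nat.pos_of_ne_zero (by omega)
  set s := Real.sqrt ((K : ℝ) + 1) with hsdef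
  set t := Real.sqrt (K : ℝ) with htdef
  have hs2 : s ^ 2 = (K:ℝ) + 1 := Real.sq_sqrt (by positivity)
  have ht2 : t ^ 2 = (K:ℝ) := Real.sq_sqrt hKpos.le
  have hsnn : 0 ≤ s := Real.sqrt_nonneg _
  have hs1 : 1 < s := by nlinarith
  have htpos : 0 < t := Real.sqrt_pos.mpr hKpos
  have hδ1 : δ < 1 := lt_of_lt_of_le hδ (by rw [div_le_one (by linarith)]; linarith)
  have h1δ : (0:ℝ) < 1 - δ := by linarith
  have hη2pos : (0:ℝ) < η ^ 2 + 1 := by positivity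
  have hη2 : η ^ 2 + 1 = 2 * s * (s - 1) / (K:ℝ) := by
    rw [hη, div_pow, ht2]
    field_simp
    linear_combination -hs2
  set q := Real.sqrt (η ^ 2 + 1) with hqdef
  have hqpos : 0 < q := Real.sqrt_pos.mpr hη2pos
  have hq2 : q ^ 2 = η ^ 2 + 1 := Real.sq_sqrt hη2pos.le
  have hKq : Real.sqrt ((K : ℝ) * (η ^ 2 + 1)) = t * q := Real.sqrt_mul hKpos.le _
  have htq2 : (t * q) ^ 2 = 2 * s * s - 2 * s := by
    rw [mul_pow, ht2, hq2, hη2]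
    field_simp
  have hKs : (K:ℝ) = s ^ 2 - 1 := by linarith
  set m : Fin (k + b + 1) := ⟨K - 1, by omega⟩ with hm
  have hmval : (m : ℕ) = K - 1 := rfl
  -- entry formula for the distinguished row of U
  have hum : ∀ i : Fin (k + b + 1), U.transpose i m =
      if (i : ℕ) < K then 1 / (t * q) else if (i : ℕ) = k + b then η / q else 0 := by
    intro i
    rw [hU, hmval, if_neg (by omega), if_pos rfl, hKq]
  set z : Fin (k + b + 1) → ℝ := (fun i => if (i : ℕ) < K then θ else 0) with hz
  set w : Fin (k + b + 1) → ℝ :=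
    (fun i : Fin (k + b + 1) => if (i : ℕ) = k + b then -(Real.sqrt (1 - δ) * ε) else 0) with hw
  -- matrix facts
  have hDT : D.transpose = D := by rw [hD, Matrix.diagonal_transpose]
  have hdet : IsUnit D.det := by
    rw [hD, Matrix.det_diagonal]
    refine isUnit_iff_ne_zero.mpr (Finset.prod_ne_zero_iff.mpr fun i _ => ?_)
    split_ifs
    · exact ne_of_gt (Real.sqrt_pos.mpr h1δ)
    · exact ne_of_gt (Real.sqrt_pos.mpr (by linarith))
  have hDDinv : D * D⁻¹ = 1 := Matrix.mul_nonsing_inv D hdet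
  have hE : ∀ i j, (U.transpose * Matrix.single m m (1:ℝ) * U) i j =
      U.transpose i m * U.transpose j m := by
    intro i j
    simp [Matrix.mul_apply, Matrix.single, Matrix.transpose_apply, ite_and,
      Finset.sum_ite_eq, Finset.mul_sum, Finset.sum_mul, mul_ite, ite_mul, zero_mul, mul_zero]
  have hDD : D * D = (1 + δ) • (1 : Matrix (Fin (k+b+1)) (Fin (k+b+1)) ℝ)
      + (-(2 * δ)) • Matrix.single m m 1 := by
    rw [hD, Matrix.diagonal_mul_diagonal]
    ext i j
    rcases eq_or_ne i j with rfl | hij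
    · rcases eq_or_ne i m with rfl | him
      · simp only [Matrix.diagonal_apply_eq, hmval, eq_self_iff_true, if_true, Matrix.add_apply,
          Matrix.smul_apply, Matrix.one_apply_eq, Matrix.single_apply_same,
          smul_eq_mul]
        rw [Real.mul_self_sqrt h1δ.le]
        ring
      · have : (i : ℕ) ≠ K - 1 := fun h => him (Fin.ext (by rw [h, hmval]))
        simp only [Matrix.diagonal_apply_eq, if_neg this, Matrix.add_apply, Matrix.smul_apply,
          Matrix.one_apply_eq, Matrix.single, Matrix.of_apply, smul_eq_mul]
        rw [if_neg (by rintro ⟨rfl, -⟩; exact him rfl)]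
        rw [Real.mul_self_sqrt (by linarith)]
        ring
    · rw [Matrix.diagonal_apply_ne _ hij]
      simp only [Matrix.add_apply, Matrix.smul_apply, Matrix.one_apply_ne hij,
        Matrix.single, Matrix.of_apply, smul_eq_mul, mul_zero]
      rw [if_neg (by rintro ⟨rfl, rfl⟩; exact hij rfl)]
      ring
  have hATA : A.transpose * A = (1 + δ) • (1 : Matrix (Fin (k+b+1)) (Fin (k+b+1)) ℝ)
      + (-(2 * δ)) • (U.transpose * Matrix.single m m 1 * U) := by
    rw [hA, Matrix.transpose_mul, hDT]
    have h1 : U.transpose * D * (D * U) = U.transpose * (D * D) * U := by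
      rw [mul_assoc, mul_assoc, mul_assoc]
    rw [h1, hDD, Matrix.mul_add, Matrix.add_mul, Matrix.mul_smul, Matrix.smul_mul,
      Matrix.mul_one, hUortho, Matrix.mul_smul, Matrix.smul_mul, mul_assoc]
  have hAv : A.transpose.mulVec v = w := by
    rw [hv, Matrix.mulVec_mulVec, hA, Matrix.transpose_mul, hDT]
    have h1 : U.transpose * D * (D⁻¹ * U) = 1 := by
      rw [mul_assoc, ← mul_assoc D, hDDinv, one_mul, hUortho]
    rw [h1, Matrix.one_mulVec]
  have key : ∀ i, (∑ l, A l i * r0 l) =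
      (1 + δ) * z i - 2 * δ * (U.transpose i m * ∑ j, U.transpose j m * z j) + w i := by
    intro i
    have h1 : (∑ l, A l i * r0 l) = A.transpose.mulVec r0 i := by
      simp [Matrix.mulVec, dotProduct, Matrix.transpose_apply]
    rw [h1, hr0, Matrix.mulVec_add, Matrix.mulVec_mulVec, hATA]
    simp only [Pi.add_apply, Matrix.add_mulVec, Matrix.smul_mulVec, Matrix.one_mulVec,
      Pi.smul_apply, smul_eq_mul, hAv]
    have h2 : (U.transpose * Matrix.single m m 1 * U).mulVec z i
        = U.transpose i m * ∑ j, U.transpose j m * z j := by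
      simp only [Matrix.mulVec, dotProduct]
      rw [Finset.mul_sum]
      exact Finset.sum_congr rfl fun j _ => by rw [hE]; ring
    rw [h2]
    ring
  have hS : (∑ j, U.transpose j m * z j) = θ * (K:ℝ) / (t * q) := by
    have h1 : ∀ j : Fin (k + b + 1), U.transpose j m * z j =
        if (j : ℕ) < K then 1 / (t * q) * θ else 0 := by
      intro j
      rw [hum]
      by_cases hj : (j : ℕ) < K <;> simp [hz, hj]
    rw [Finset.sum_congr rfl fun j _ => h1 j,
      Fin.sum_univ_eq_sum_range (fun j => if j < K then 1 / (t * q) * θ else 0) (k + b + 1),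
      ← Finset.sum_subset (Finset.range_subset_range.mpr (by omega : K ≤ k + b + 1))
        (fun x _ hx => by rw [if_neg (by simpa using hx)]),
      Finset.sum_congr rfl (fun j hj => if_pos (Finset.mem_range.mp hj)),
      Finset.sum_const, Finset.card_range, nsmul_eq_mul]
    ring
  -- the three statements
  have G1 : ∀ i : Fin (k + b + 1), (i : ℕ) < K →
      (∑ l, A l i * r0 l) = (1 - δ / s) * θ := by
    intro i hi
    rw [key i, hS, hum i, if_pos hi]
    have hzi : z i = θ := if_pos hi
    have hwi : w i = 0 := if_neg (by omega)
    rw [hzi, hwi]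
    have htq : t * q ≠ 0 := by positivity
    have hs0 : s ≠ 0 := by positivity
    field_simp
    linear_combination (δ*θ*(s+1)) * htq2 - (2*δ*θ*s) * hKs
  have G2 : ∀ i : Fin (k + b + 1), (i : ℕ) = k + b →
      (∑ l, A l i * r0 l) = -(((K:ℝ) / s) * δ * θ) - Real.sqrt (1 - δ) * ε := by
    intro i hi
    rw [key i, hS, hum i, if_neg (by omega), if_pos hi]
    have hzi : z i = 0 := if_neg (by omega)
    have hwi : w i = -(Real.sqrt (1 - δ) * ε) := if_pos hi
    rw [hzi, hwi, hη]
    have ht0 : t ≠ 0 := ne_of_gt htpos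
    have hq0 : q ≠ 0 := ne_of_gt hqpos
    have hs0 : s ≠ 0 := by positivity
    field_simp
    linear_combination ((K:ℝ)*δ*θ) * htq2
  refine ⟨G1, G2, ?_⟩
  intro hθ i i' hi hi'
  rw [G1 i hi, G2 i' hi']
  have hsδ : (0:ℝ) < 1 - s * δ := by
    rw [lt_div_iff₀ (by linarith : (0:ℝ) < s)] at hδ
    linarith
  have hθ' : Real.sqrt (1 - δ) * ε = θ * (1 - s * δ) := by
    rw [hθ]; field_simp
    exact (div_self (by nlinarith)).symm
  have : -(((K:ℝ) / s) * δ * θ) - Real.sqrt (1 - δ) * ε = -((1 - δ / s) * θ) := by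
    rw [hθ', hKs]
    field_simp
    ring
  rw [this, abs_neg]
end

section
/- If the OMP_{T₀} algorithm selects indices only from T\T₀ in each of the first k−g iterations applied to y = Ax + v (so Λ_{k−g} = T∪T₀), then the residual satisfies ‖r^{k−g}‖₂ = ‖P⊥_{Λ_{k−g}} v‖₂ ≤ ‖v‖₂; and for 0 ≤ t < k−g, if A satisfies the RIP of order k+b+1 with constant δ, then ‖r^t‖₂ ≥ √(1−δ)·min_{i∈T\T₀}|x_i| − ‖v‖₂. -/
open scoped BigOperators

lemma sqrt_sum_eq_norm {m : ℕ} (f : Fin m → ℝ) :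
    Real.sqrt (∑ i, f i ^ 2) = ‖(WithLp.equiv 2 (Fin m → ℝ)).symm f‖ := by
  rw [EuclideanSpace.norm_eq]
  simp [Real.norm_eq_abs, sq_abs]

lemma sqrt_triangle {m : ℕ} (a w : Fin m → ℝ) :
    Real.sqrt (∑ i, a i ^ 2) - Real.sqrt (∑ i, w i ^ 2)
      ≤ Real.sqrt (∑ i, (a i + w i) ^ 2) := by
  rw [sqrt_sum_eq_norm, sqrt_sum_eq_norm, sqrt_sum_eq_norm]
  set A := (WithLp.equiv 2 (Fin m → ℝ)).symm a
  set W := (WithLp.equiv 2 (Fin m → ℝ)).symm w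
  have h : (WithLp.equiv 2 (Fin m → ℝ)).symm (fun i => a i + w i) = A + W := rfl
  rw [h, sub_le_iff_le_add]
  calc ‖A‖ = ‖(A + W) - W‖ := by rw [add_sub_cancel_right]
    _ ≤ ‖A + W‖ + ‖W‖ := norm_sub_le _ _

/-- If OMP selects only indices from `T\T₀` in the first `k−g` iterations
(`Λ_t = T₀ ∪ {j₁,…,j_t}` with the `j`'s in `T\T₀`), then: when `Λ = T∪T₀` the residual
equals `P⊥_Λ v` and `‖r^{k−g}‖₂ ≤ ‖v‖₂`; and for `t < k−g`, if `A` satisfies the RIP of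
order `k+b+1` with constant `δ`, then `‖rᵗ‖₂ ≥ √(1−δ)·min_{i∈T\T₀}|x_i| − ‖v‖₂`.
The residual `r` at step with index set `Λ` is characterized by `r = y − A w`,
`w` supported on `Λ`, and orthogonality of `r` to the columns of `A` in `Λ`. -/
theorem stmt19 (m n k g b : ℕ) (hg : g < k)
    (A : Matrix (Fin m) (Fin n) ℝ) (δ : ℝ) (hRIP : RIP A (k + b + 1) δ)
    (x : Fin n → ℝ) (v : Fin m → ℝ) (T T₀ : Finset (Fin n))
    (hT : ∀ i, x i ≠ 0 ↔ i ∈ T) (hTcard : T.card = k)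
    (hcap : (T ∩ T₀).card = g) (hbcard : (T₀ \ T).card = b)
    (hne : (T \ T₀).Nonempty)
    (y : Fin m → ℝ) (hy : y = A.mulVec x + v)
    (Λ : Finset (Fin n)) (hΛ1 : T₀ ⊆ Λ) (hΛ2 : Λ \ T₀ ⊆ T \ T₀)
    (r : Fin m → ℝ)
    (hr : ∃ w : Fin n → ℝ, (∀ i ∉ Λ, w i = 0) ∧ r = y - A.mulVec w ∧
      ∀ i ∈ Λ, (∑ l, A l i * r l) = 0) :
    (Λ = T ∪ T₀ →
      (∃ w' : Fin n → ℝ, (∀ i ∉ Λ, w' i = 0) ∧ r = v - A.mulVec w') ∧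
      Real.sqrt (∑ i, r i ^ 2) ≤ Real.sqrt (∑ i, v i ^ 2)) ∧
    ((Λ \ T₀).card < k - g →
      Real.sqrt (∑ i, r i ^ 2) ≥
        Real.sqrt (1 - δ) * ((T \ T₀).inf' hne fun i => |x i|) -
          Real.sqrt (∑ i, v i ^ 2)) := by
  obtain ⟨w, hw0, hrw, horth⟩ := hr
  have hxzero : ∀ i ∉ T, x i = 0 := fun i hi => by
    by_contra hx; exact hi ((hT i).mp hx)
  -- z := x - w is the signal part of the residual: r = A z + v
  set z : Fin n → ℝ := x - w with hz
  have hrz : r = fun i => (A.mulVec z) i + v i := by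
    funext i
    rw [hrw, hy, hz, Matrix.mulVec_sub]
    simp [sub_eq_add_neg]; ring
  -- Λ ⊆ T ∪ T₀
  have hΛsub : Λ ⊆ T ∪ T₀ := by
    intro i hi
    by_cases h0 : i ∈ T₀
    · exact Finset.mem_union_right _ h0
    · exact Finset.mem_union_left _ (Finset.mem_sdiff.mp (hΛ2 (Finset.mem_sdiff.mpr ⟨hi, h0⟩))).1
  constructor
  · -- Part 1
    intro hΛeq
    have hTΛ : T ⊆ Λ := hΛeq ▸ Finset.subset_union_left
    refine ⟨⟨w - x, fun i hi => by
        rw [Pi.sub_apply, hw0 i hi, hxzero i (fun hiT => hi (hTΛ hiT)), sub_zero],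
      by rw [hrw, hy, Matrix.mulVec_sub]; funext i; simp; ring⟩, ?_⟩
    -- ∑ r² ≤ ∑ v² since v = r + A(w-x) with cross term zero
    set u : Fin n → ℝ := w - x with hu
    have hveq : ∀ i, v i = r i + (A.mulVec u) i := by
      intro i
      rw [hrw, hy, hu, Matrix.mulVec_sub]
      simp only [Pi.add_apply, Pi.sub_apply]
      ring
    have hcross : ∑ i, r i * (A.mulVec u) i = 0 := by
      have hswap : ∑ i, r i * (A.mulVec u) i = ∑ j, u j * (∑ i, A i j * r i) := by
        simp only [Matrix.mulVec, dotProduct, Finset.mul_sum]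
        rw [Finset.sum_comm]
        refine Finset.sum_congr rfl fun j _ => ?_
        exact Finset.sum_congr rfl fun i _ => by ring
      rw [hswap]
      refine Finset.sum_eq_zero fun j _ => ?_
      by_cases hj : j ∈ Λ
      · rw [horth j hj, mul_zero]
      · rw [hu]
        simp [hw0 j hj, hxzero j (fun hjT => hj (hTΛ hjT))]
    have hsum : ∑ i, v i ^ 2 = ∑ i, r i ^ 2 + ∑ i, (A.mulVec u) i ^ 2 := by
      calc ∑ i, v i ^ 2 = ∑ i, (r i + (A.mulVec u) i) ^ 2 := by
            exact Finset.sum_congr rfl fun i _ => by rw [hveq i]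
        _ = ∑ i, (r i ^ 2 + 2 * (r i * (A.mulVec u) i) + (A.mulVec u) i ^ 2) := by
            exact Finset.sum_congr rfl fun i _ => by ring
        _ = ∑ i, r i ^ 2 + 2 * (∑ i, r i * (A.mulVec u) i) + ∑ i, (A.mulVec u) i ^ 2 := by
            rw [Finset.sum_add_distrib, Finset.sum_add_distrib, Finset.mul_sum]
        _ = ∑ i, r i ^ 2 + ∑ i, (A.mulVec u) i ^ 2 := by rw [hcross]; ring
    apply Real.sqrt_le_sqrt
    rw [hsum]
    have : (0:ℝ) ≤ ∑ i, (A.mulVec u) i ^ 2 := Finset.sum_nonneg fun i _ => sq_nonneg _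
    linarith
  · -- Part 2
    intro hcard
    -- find i₀ ∈ T \ T₀ with i₀ ∉ Λ
    have hTT0card : (T \ T₀).card = k - g := by
      have := Finset.card_sdiff_add_card_inter T T₀
      omega
    have hss : Λ \ T₀ ⊂ T \ T₀ :=
      lt_of_le_of_ne hΛ2 (fun h => by rw [h, hTT0card] at hcard; omega)
    obtain ⟨i₀, hi₀mem, hi₀not⟩ := Finset.exists_of_ssubset hss
    have hi₀T : i₀ ∈ T := (Finset.mem_sdiff.mp hi₀mem).1
    have hi₀T₀ : i₀ ∉ T₀ := (Finset.mem_sdiff.mp hi₀mem).2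
    have hi₀Λ : i₀ ∉ Λ := fun h => hi₀not (Finset.mem_sdiff.mpr ⟨h, hi₀T₀⟩)
    -- z supported on T ∪ T₀, card ≤ k + b
    have hzsupp : ∀ i ∉ T ∪ T₀, z i = 0 := by
      intro i hi
      rw [hz, Pi.sub_apply, hxzero i (fun h => hi (Finset.mem_union_left _ h)),
        hw0 i (fun h => hi (hΛsub h)), sub_zero]
    have hcardTT0 : (T ∪ T₀).card ≤ k + b + 1 := by
      have h1 : (T ∪ T₀).card = T.card + (T₀ \ T).card := by
        rw [← Finset.union_sdiff_self_eq_union,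
          Finset.card_union_of_disjoint Finset.disjoint_sdiff]
      omega
    have hRIPz := (hRIP z ⟨T ∪ T₀, hcardTT0, hzsupp⟩).1
    -- min bound
    set c := (T \ T₀).inf' hne fun i => |x i| with hc
    have hcle : c ≤ |x i₀| := Finset.inf'_le _ hi₀mem
    have hc0 : 0 ≤ c := by
      obtain ⟨j, _, hj⟩ := Finset.exists_mem_eq_inf' hne fun i => |x i|
      rw [hc, hj]; exact abs_nonneg _
    have hzc : c ^ 2 ≤ ∑ i, z i ^ 2 := by
      have h1 : z i₀ = x i₀ := by
        rw [hz, Pi.sub_apply, hw0 i₀ hi₀Λ, sub_zero]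
      calc c ^ 2 ≤ |x i₀| ^ 2 := by
            exact pow_le_pow_left₀ hc0 hcle 2
        _ = z i₀ ^ 2 := by rw [h1, sq_abs]
        _ ≤ ∑ i, z i ^ 2 :=
            Finset.single_le_sum (fun i _ => sq_nonneg (z i)) (Finset.mem_univ i₀)
    have hstep : Real.sqrt (1 - δ) * c ≤ Real.sqrt (∑ i, (A.mulVec z) i ^ 2) := by
      rcases le_or_gt 0 (1 - δ) with h | h
      · calc Real.sqrt (1 - δ) * c = Real.sqrt ((1 - δ) * c ^ 2) := by
              rw [Real.sqrt_mul h, Real.sqrt_sq hc0]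
          _ ≤ Real.sqrt ((1 - δ) * ∑ i, z i ^ 2) :=
              Real.sqrt_le_sqrt (mul_le_mul_of_nonneg_left hzc h)
          _ ≤ Real.sqrt (∑ i, (A.mulVec z) i ^ 2) := Real.sqrt_le_sqrt hRIPz
      · rw [Real.sqrt_eq_zero_of_nonpos h.le, zero_mul]
        exact Real.sqrt_nonneg _
    have htri := sqrt_triangle (fun i => (A.mulVec z) i) v
    rw [ge_iff_le, hrz]
    calc Real.sqrt (1 - δ) * c - Real.sqrt (∑ i, v i ^ 2)
        ≤ Real.sqrt (∑ i, (A.mulVec z) i ^ 2) - Real.sqrt (∑ i, v i ^ 2) := by linarith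
      _ ≤ Real.sqrt (∑ i, ((A.mulVec z) i + v i) ^ 2) := htri
end
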